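/- arXiv:math/0301077 — 3 statements merged into one kernel-verified Lean document; each statement's English description precedes it below -/
import Mathlib

section
/- Let n ≥ 1 and R > 0. There exists a constant C > 0, depending only on n and R, with the following property: if A, B : [0,π] → Matrix (Fin n) (Fin n) ℂ have integrable entries with ∫₀^π ‖A(t)‖ dt ≤ R and ∫₀^π ‖B(t)‖ dt ≤ R, if f : [0,π] → ℂⁿ is integrable, c ∈ [0,π], ξ ∈ ℂⁿ, and if y_A, y_B : [0,π] → ℂⁿ are the (unique) continuous solutions of y_A(x) = ξ + ∫_c^x (A(t)y_A(t) + f(t)) dt and y_B(x) = ξ + ∫_c^x (B(t)y_B(t) + f(t)) dt, then sup_{x∈[0,π]} ‖y_A(x) − y_B(x)‖ ≤ C·(‖ξ‖ + ∫₀^π ‖f(t)‖ dt)·∫₀^π ‖A(t) − B(t)‖ dt. -/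
open MeasureTheory Set
open scoped Interval

attribute [local instance] Matrix.linftyOpNormedAddCommGroup

attribute [local instance] Matrix.linftyOpNormedSpace Matrix.linftyOpIsBoundedSMul

lemma my_integrableOn_mul_of_continuousOn {a b : ℝ} {g u : ℝ → ℝ}
    (hg : IntegrableOn g (Icc a b)) (hu : ContinuousOn u (Icc a b)) :
    IntegrableOn (fun t => g t * u t) (Icc a b) := by
  obtain ⟨M, hM⟩ := isCompact_Icc.exists_bound_of_continuousOn hu
  refine Integrable.mono' (hg.norm.const_mul (max M 0)) ?_ ?_
  · exact hg.aestronglyMeasurable.mul (hu.aestronglyMeasurable measurableSet_Icc)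
  · filter_upwards [ae_restrict_mem measurableSet_Icc] with t ht
    calc ‖g t * u t‖ = ‖g t‖ * ‖u t‖ := norm_mul _ _
      _ ≤ ‖g t‖ * max M 0 := by
          exact mul_le_mul_of_nonneg_left (le_trans (hM t ht) (le_max_left _ _)) (norm_nonneg _)
      _ = max M 0 * ‖g t‖ := mul_comm _ _

lemma my_gronwall_right (a b : ℝ) (g u : ℝ → ℝ)
    (hg : IntegrableOn g (Icc a b)) (hg0 : ∀ t ∈ Icc a b, 0 ≤ g t)
    (hu : ContinuousOn u (Icc a b)) (hu0 : ∀ t ∈ Icc a b, 0 ≤ u t)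
    (K R : ℝ) (hK : 0 ≤ K) (hR0 : 0 ≤ R) (hgR : (∫ t in Icc a b, g t) ≤ R)
    (hyp : ∀ x ∈ Icc a b, u x ≤ K + ∫ t in Icc a x, g t * u t) :
    ∀ x ∈ Icc a b, u x ≤ K * (2*R+2) ^ (Nat.ceil (2*R)) := by
  have hN1 : (1:ℝ) ≤ 2*R+2 := by linarith
  have hgu : IntegrableOn (fun t => g t * u t) (Icc a b) :=
    my_integrableOn_mul_of_continuousOn hg hu
  set G : ℝ → ℝ := fun x => ∫ t in Icc a x, g t with hGdef
  have hGmono : ∀ x y, x ≤ y → y ≤ b → G x ≤ G y := by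
    intro x y hxy hyb
    refine setIntegral_mono_set (hg.mono_set (Icc_subset_Icc_right hyb)) ?_
      (HasSubset.Subset.eventuallyLE (Icc_subset_Icc_right hxy))
    filter_upwards [ae_restrict_mem measurableSet_Icc] with t ht
    exact hg0 t ⟨ht.1, le_trans ht.2 hyb⟩
  have hGb : ∀ x ∈ Icc a b, G x ≤ R := fun x hx => le_trans (hGmono x b hx.2 le_rfl) hgR
  have hG0 : ∀ x ∈ Icc a b, 0 ≤ G x := fun x hx =>
    setIntegral_nonneg measurableSet_Icc (fun t ht => hg0 t ⟨ht.1, le_trans ht.2 hx.2⟩)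
  have hsplit : ∀ f : ℝ → ℝ, IntegrableOn f (Icc a b) → ∀ y z, a ≤ y → y ≤ z → z ≤ b →
      (∫ t in Icc a z, f t) = (∫ t in Icc a y, f t) + ∫ t in Ioc y z, f t := by
    intro f hf y z hay hyz hzb
    rw [← Icc_union_Ioc_eq_Icc hay hyz]
    refine setIntegral_union ?_ measurableSet_Ioc
      (hf.mono_set (Icc_subset_Icc_right (le_trans hyz hzb)))
      (hf.mono_set (fun t ht => ⟨le_trans hay (le_of_lt ht.1), le_trans ht.2 hzb⟩))
    exact Set.disjoint_left.2 fun t h1 h2 => absurd h1.2 (not_le.2 h2.1)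
  have key : ∀ i : ℕ, ∀ x ∈ Icc a b, G x ≤ i / 2 → u x ≤ K * (2*R+2)^i := by
    intro i
    induction i with
    | zero =>
      intro x hx hGx
      have hax : a ≤ x := hx.1
      have hsub : Icc a x ⊆ Icc a b := Icc_subset_Icc_right hx.2
      obtain ⟨M, hM⟩ := isCompact_Icc.exists_bound_of_continuousOn (hu.mono hsub)
      have hint : (∫ t in Icc a x, g t * u t) ≤ (∫ t in Icc a x, g t * max M 0) := by
        refine setIntegral_mono_on (hgu.mono_set hsub) ((hg.mono_set hsub).mul_const _)
          measurableSet_Icc (fun t ht => ?_)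
        refine mul_le_mul_of_nonneg_left ?_ (hg0 t (hsub ht))
        exact le_trans (le_trans (le_abs_self _) (hM t ht)) (le_max_left _ _)
      rw [integral_mul_const] at hint
      have hGx0 : G x ≤ 0 := by
        simpa using hGx
      have : (∫ t in Icc a x, g t * u t) ≤ 0 := by
        refine le_trans hint (mul_nonpos_of_nonpos_of_nonneg hGx0 (le_max_right _ _))
      have := hyp x hx
      simpa [pow_zero] using by linarith
    | succ i ih =>
      intro x hx hGx
      by_cases hcase : G x ≤ i / 2
      · refine le_trans (ih x hx hcase) ?_
        exact mul_le_mul_of_nonneg_left (pow_le_pow_right₀ hN1 (Nat.le_succ i)) hK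
      push_neg at hcase
      have hax : a ≤ x := hx.1
      have hsub : Icc a x ⊆ Icc a b := Icc_subset_Icc_right hx.2
      have hGa : G a = 0 := by
        simp [hGdef, integral_Icc_eq_integral_Ioc]
      have hGcont : ContinuousOn G (Icc a x) := intervalIntegral.continuousOn_primitive_Icc (hg.mono_set hsub)
      have hmem : (i/2 : ℝ) ∈ Icc (G a) (G x) := by
        constructor
        · rw [hGa]; positivity
        · exact le_of_lt hcase
      obtain ⟨y, hy, hGy⟩ := intermediate_value_Icc hax hGcont hmem
      have hyI : y ∈ Icc a b := ⟨hy.1, le_trans hy.2 hx.2⟩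
      set S := sSup (u '' Icc y x) with hSdef
      have hne : (u '' Icc y x).Nonempty := ⟨u x, mem_image_of_mem _ (right_mem_Icc.2 hy.2)⟩
      have hbdd : BddAbove (u '' Icc y x) :=
        (isCompact_Icc.image_of_continuousOn (hu.mono (Icc_subset_Icc hyI.1 hx.2))).bddAbove
      have hle_S : ∀ z ∈ Icc y x, u z ≤ S := fun z hz => le_csSup hbdd (mem_image_of_mem _ hz)
      have hS0 : 0 ≤ S := le_trans (hu0 y hyI) (hle_S y (left_mem_Icc.2 hy.2))
      have hNi : (1:ℝ) ≤ (2*R+2)^i := one_le_pow₀ hN1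
      have hstep : ∀ z ∈ Icc y x, u z ≤ K + R * (K * (2*R+2)^i) + S * (1/2) := by
        intro z hz
        have hzI : z ∈ Icc a b := ⟨le_trans hyI.1 hz.1, le_trans hz.2 hx.2⟩
        have h1 := hyp z hzI
        have hsp := hsplit _ hgu y z hyI.1 hz.1 hzI.2
        have hb1 : (∫ t in Icc a y, g t * u t) ≤ R * (K * (2*R+2)^i) := by
          have hsub2 : Icc a y ⊆ Icc a b := Icc_subset_Icc_right hyI.2
          have : (∫ t in Icc a y, g t * u t) ≤ ∫ t in Icc a y, g t * (K * (2*R+2)^i) := by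
            refine setIntegral_mono_on (hgu.mono_set hsub2) ((hg.mono_set hsub2).mul_const _)
              measurableSet_Icc (fun t ht => ?_)
            refine mul_le_mul_of_nonneg_left ?_ (hg0 t (hsub2 ht))
            refine ih t (hsub2 ht) ?_
            rw [← hGy]
            exact hGmono t y ht.2 hyI.2
          rw [integral_mul_const] at this
          refine le_trans this ?_
          exact mul_le_mul_of_nonneg_right (hGb y hyI) (by positivity)
        have hb2 : (∫ t in Ioc y z, g t * u t) ≤ S * (1/2) := by
          have hsubIoc : Ioc y z ⊆ Icc a b :=
            fun t ht => ⟨le_trans hyI.1 (le_of_lt ht.1), le_trans ht.2 hzI.2⟩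
          have h2 : (∫ t in Ioc y z, g t * u t) ≤ ∫ t in Ioc y z, g t * S := by
            refine setIntegral_mono_on (hgu.mono_set hsubIoc) ((hg.mono_set hsubIoc).mul_const _)
              measurableSet_Ioc (fun t ht => ?_)
            exact mul_le_mul_of_nonneg_left (hle_S t ⟨le_of_lt ht.1, le_trans ht.2 hz.2⟩)
              (hg0 t (hsubIoc ht))
          rw [integral_mul_const] at h2
          have hGz : (∫ t in Ioc y z, g t) = G z - G y := by
            have := hsplit _ hg y z hyI.1 hz.1 hzI.2
            linarith
          have hhalf : (∫ t in Ioc y z, g t) ≤ 1/2 := by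
            rw [hGz, hGy]
            have : G z ≤ G x := hGmono z x hz.2 hx.2
            have hGxle : G x ≤ (i+1)/2 := by
              push_cast at hGx; linarith
            linarith
          exact le_trans h2 (le_trans (mul_le_mul_of_nonneg_right hhalf hS0)
            (le_of_eq (mul_comm _ _)))
        linarith
      have hSle : S ≤ K + R * (K * (2*R+2)^i) + S * (1/2) := by
        refine csSup_le hne ?_
        rintro _ ⟨z, hz, rfl⟩
        exact hstep z hz
      have hux : u x ≤ S := hle_S x (right_mem_Icc.2 hy.2)
      have hfin : S ≤ K * (2*R+2)^(i+1) := by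
        have hpow : (2*R+2)^(i+1) = (2*R+2) * (2*R+2)^i := pow_succ' _ _
        nlinarith [hNi, hK, hR0]
      linarith
  intro x hx
  have h2R : 2*R ≤ (Nat.ceil (2*R) : ℝ) := Nat.le_ceil _
  exact key _ x hx (by linarith [hGb x hx])

lemma my_gronwall_left (a b : ℝ) (g u : ℝ → ℝ)
    (hg : IntegrableOn g (Icc a b)) (hg0 : ∀ t ∈ Icc a b, 0 ≤ g t)
    (hu : ContinuousOn u (Icc a b)) (hu0 : ∀ t ∈ Icc a b, 0 ≤ u t)
    (K R : ℝ) (hK : 0 ≤ K) (hR0 : 0 ≤ R) (hgR : (∫ t in Icc a b, g t) ≤ R)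
    (hyp : ∀ x ∈ Icc a b, u x ≤ K + ∫ t in Icc x b, g t * u t) :
    ∀ x ∈ Icc a b, u x ≤ K * (2*R+2) ^ (Nat.ceil (2*R)) := by
  rcases le_or_gt a b with hab | hab
  swap
  · intro x hx; exact absurd (le_trans hx.1 hx.2) (not_le.2 hab)
  have hmaps : ∀ x ∈ Icc a b, a + b - x ∈ Icc a b := by
    intro x hx; constructor <;> [linarith [hx.2]; linarith [hx.1] ]
  -- reflected functions
  set g' : ℝ → ℝ := fun t => g (a + b - t) with hg'def
  set u' : ℝ → ℝ := fun t => u (a + b - t) with hu'def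
  have hrefl_cont : ContinuousOn (fun t : ℝ => a + b - t) (Icc a b) :=
    (continuous_const.sub continuous_id).continuousOn
  have hu' : ContinuousOn u' (Icc a b) := hu.comp hrefl_cont hmaps
  have hu0' : ∀ t ∈ Icc a b, 0 ≤ u' t := fun t ht => hu0 _ (hmaps t ht)
  -- integrability of reflected functions
  have hIcc_Ioc : ∀ (f : ℝ → ℝ) (c d : ℝ), IntegrableOn f (Icc c d) ↔ IntegrableOn f (Ioc c d) := by
    intro f c d
    exact integrableOn_Icc_iff_integrableOn_Ioc
  have hrefl_int : ∀ f : ℝ → ℝ, IntegrableOn f (Icc a b) →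
      IntegrableOn (fun t => f (a + b - t)) (Icc a b) := by
    intro f hf
    rw [hIcc_Ioc]
    rw [← intervalIntegrable_iff_integrableOn_Ioc_of_le hab]
    have : IntervalIntegrable f volume a b := by
      rw [intervalIntegrable_iff_integrableOn_Ioc_of_le hab]
      exact ((hIcc_Ioc f a b).1 hf)
    have := (this.comp_sub_left (a + b)).symm
    simpa using this
  have hg' : IntegrableOn g' (Icc a b) := hrefl_int g hg
  have hg0' : ∀ t ∈ Icc a b, 0 ≤ g' t := fun t ht => hg0 _ (hmaps t ht)
  -- reflected integrals
  have hrefl_integral : ∀ f : ℝ → ℝ, ∀ x ∈ Icc a b,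
      (∫ t in Icc a x, f (a + b - t)) = ∫ t in Icc (a + b - x) b, f t := by
    intro f x hx
    rw [integral_Icc_eq_integral_Ioc, integral_Icc_eq_integral_Ioc,
      ← intervalIntegral.integral_of_le hx.1, ← intervalIntegral.integral_of_le (by linarith [hx.1] : a + b - x ≤ b)]
    have := intervalIntegral.integral_comp_sub_left (a := a) (b := x) f (a + b)
    simpa using this
  have hyp' : ∀ x ∈ Icc a b, u' x ≤ K + ∫ t in Icc a x, g' t * u' t := by
    intro x hx
    have h1 := hyp _ (hmaps x hx)
    have h2 := hrefl_integral (fun t => g t * u t) x hx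
    calc u' x ≤ K + ∫ t in Icc (a + b - x) b, g t * u t := h1
      _ = K + ∫ t in Icc a x, g' t * u' t := by rw [← h2]
  have hgR' : (∫ t in Icc a b, g' t) ≤ R := by
    have := hrefl_integral g b (right_mem_Icc.2 hab)
    simpa [hg'def, this] using hgR
  have := my_gronwall_right a b g' u' hg' hg0' hu' hu0' K R hK hR0 hgR' hyp'
  intro x hx
  have hx' := hmaps x hx
  have := this _ hx'
  simpa [hu'def, sub_sub_cancel] using this

lemma my_gronwall (a b c : ℝ) (hc : c ∈ Icc a b) (g u : ℝ → ℝ)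
    (hg : IntegrableOn g (Icc a b)) (hg0 : ∀ t ∈ Icc a b, 0 ≤ g t)
    (hu : ContinuousOn u (Icc a b)) (hu0 : ∀ t ∈ Icc a b, 0 ≤ u t)
    (K R : ℝ) (hK : 0 ≤ K) (hR0 : 0 ≤ R) (hgR : (∫ t in Icc a b, g t) ≤ R)
    (hyp : ∀ x ∈ Icc a b, u x ≤ K + ∫ t in Ι c x, g t * u t) :
    ∀ x ∈ Icc a b, u x ≤ K * (2*R+2) ^ (Nat.ceil (2*R)) := by
  have hsub_mono : ∀ s : Set ℝ, s ⊆ Icc a b → MeasurableSet s → (∫ t in s, g t) ≤ R := by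
    intro s hs hms
    refine le_trans ?_ hgR
    refine setIntegral_mono_set hg ?_ (HasSubset.Subset.eventuallyLE hs)
    filter_upwards [ae_restrict_mem measurableSet_Icc] with t ht using hg0 t ht
  intro x hx
  rcases le_total c x with hcx | hxc
  · -- right branch on [c, b]
    have hsub : Icc c b ⊆ Icc a b := Icc_subset_Icc_left hc.1
    refine my_gronwall_right c b g u (hg.mono_set hsub) (fun t ht => hg0 t (hsub ht))
      (hu.mono hsub) (fun t ht => hu0 t (hsub ht)) K R hK hR0
      (hsub_mono _ hsub measurableSet_Icc) ?_ x ⟨hcx, hx.2⟩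
    intro z hz
    have hzI : z ∈ Icc a b := hsub hz
    have := hyp z hzI
    rwa [uIoc_of_le hz.1, ← integral_Icc_eq_integral_Ioc] at this
  · -- left branch on [a, c]
    have hsub : Icc a c ⊆ Icc a b := Icc_subset_Icc_right hc.2
    refine my_gronwall_left a c g u (hg.mono_set hsub) (fun t ht => hg0 t (hsub ht))
      (hu.mono hsub) (fun t ht => hu0 t (hsub ht)) K R hK hR0
      (hsub_mono _ hsub measurableSet_Icc) ?_ x ⟨hx.1, hxc⟩
    intro z hz
    have hzI : z ∈ Icc a b := hsub hz
    have := hyp z hzI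
    rwa [uIoc_comm, uIoc_of_le hz.2, ← integral_Icc_eq_integral_Ioc] at this

lemma my_aesm_pi {n : ℕ} {μ : Measure ℝ} {f : ℝ → Fin n → ℂ}
    (h : ∀ i, AEStronglyMeasurable (fun t => f t i) μ) : AEStronglyMeasurable f μ := by
  have hf : f = fun t => ∑ i, f t i • (Pi.single i (1:ℂ) : Fin n → ℂ) := by
    funext t
    have : ∀ i : Fin n, f t i • (Pi.single i (1:ℂ) : Fin n → ℂ)
        = (Pi.single i (f t i) : Fin n → ℂ) := by
      intro i
      rw [← Pi.single_smul]
      simp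
    simp_rw [this]
    exact (Finset.univ_sum_single (f t)).symm
  rw [hf]
  exact Finset.aestronglyMeasurable_fun_sum _ fun i _ => (h i).smul_const _

lemma my_aesm_matrix {n : ℕ} {μ : Measure ℝ} {A : ℝ → Matrix (Fin n) (Fin n) ℂ}
    (h : ∀ i j, AEStronglyMeasurable (fun t => A t i j) μ) : AEStronglyMeasurable A μ := by
  have hA : A = fun t => ∑ i, ∑ j, A t i j • Matrix.single i j (1:ℂ) := by
    funext t
    simp_rw [Matrix.smul_single, smul_eq_mul, mul_one]
    exact Matrix.matrix_eq_sum_single (A t)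
  rw [hA]
  exact Finset.aestronglyMeasurable_fun_sum _ fun i _ =>
    Finset.aestronglyMeasurable_fun_sum _ fun j _ => (h i j).smul_const _

lemma my_matrix_norm_le {n : ℕ} (M : Matrix (Fin n) (Fin n) ℂ) :
    ‖M‖ ≤ ∑ i, ∑ j, ‖M i j‖ := by
  have h : ‖M‖₊ ≤ ∑ i, ∑ j, ‖M i j‖₊ := by
    rw [Matrix.linfty_opNNNorm_def]
    refine Finset.sup_le fun i _ => ?_
    exact Finset.single_le_sum (f := fun i => ∑ j, ‖M i j‖₊) (fun _ _ => zero_le)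
      (Finset.mem_univ i)
  calc ‖M‖ = (‖M‖₊ : ℝ) := rfl
    _ ≤ ((∑ i, ∑ j, ‖M i j‖₊ : NNReal) : ℝ) := by exact_mod_cast h
    _ = ∑ i, ∑ j, ‖M i j‖ := by push_cast; rfl

lemma my_integrableOn_matrix_norm {n : ℕ} {s : Set ℝ} (hs : MeasurableSet s)
    {A : ℝ → Matrix (Fin n) (Fin n) ℂ}
    (hA : ∀ i j, IntegrableOn (fun t => A t i j) s) :
    IntegrableOn (fun t => ‖A t‖) s := by
  refine Integrable.mono' (g := fun t => ∑ i, ∑ j, ‖A t i j‖)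
    (integrable_finset_sum _ fun i _ => integrable_finset_sum _ fun j _ => (hA i j).norm) ?_ ?_
  · exact (my_aesm_matrix fun i j => (hA i j).aestronglyMeasurable).norm
  · refine ae_of_all _ fun t => ?_
    rw [Real.norm_eq_abs, abs_of_nonneg (norm_nonneg _)]
    exact my_matrix_norm_le (A t)

lemma my_integrableOn_mulVec {n : ℕ} {a b : ℝ}
    {A : ℝ → Matrix (Fin n) (Fin n) ℂ} {y : ℝ → Fin n → ℂ}
    (hA : ∀ i j, IntegrableOn (fun t => A t i j) (Icc a b))
    (hy : ContinuousOn y (Icc a b)) :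
    IntegrableOn (fun t => (A t).mulVec (y t)) (Icc a b) := by
  obtain ⟨M, hM⟩ := isCompact_Icc.exists_bound_of_continuousOn hy
  have hAn : IntegrableOn (fun t => ‖A t‖) (Icc a b) :=
    my_integrableOn_matrix_norm measurableSet_Icc hA
  refine Integrable.mono' (hAn.norm.mul_const (max M 0)) ?_ ?_
  · refine my_aesm_pi fun i => ?_
    have : (fun t => (A t).mulVec (y t) i) = fun t => ∑ j, A t i j * y t j := by
      funext t; simp [Matrix.mulVec, dotProduct]
    rw [this]
    refine Finset.aestronglyMeasurable_fun_sum _ fun j _ => ?_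
    exact (hA i j).aestronglyMeasurable.mul
      (((continuous_apply j).comp_continuousOn hy).aestronglyMeasurable measurableSet_Icc)
  · filter_upwards [ae_restrict_mem measurableSet_Icc] with t ht
    calc ‖(A t).mulVec (y t)‖ ≤ ‖A t‖ * ‖y t‖ := Matrix.linfty_opNorm_mulVec _ _
      _ ≤ ‖A t‖ * max M 0 := by
          exact mul_le_mul_of_nonneg_left (le_trans (hM t ht) (le_max_left _ _)) (norm_nonneg _)
      _ = ‖‖A t‖‖ * max M 0 := by rw [Real.norm_eq_abs, abs_of_nonneg (norm_nonneg _)]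

/-- **Continuous dependence of solutions on the coefficient matrix.**
There is a constant `C = C(n, R)` such that if `A`, `B` are matrix-valued functions with
integrable entries whose `L¹`-norms are bounded by `R`, then the continuous solutions
`y_A`, `y_B` of the corresponding integral equations with the same data `ξ`, `f`, `c`
satisfy `‖y_A x − y_B x‖ ≤ C (‖ξ‖ + ∫‖f‖) ∫‖A − B‖` on `[0,π]`. -/
theorem sturm_liouville_linear_system_continuous_dependence
    (n : ℕ) (hn : 1 ≤ n) (R : ℝ) (hR : 0 < R) :
    ∃ C > (0:ℝ), ∀ (A B : ℝ → Matrix (Fin n) (Fin n) ℂ) (f : ℝ → Fin n → ℂ)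
      (c : ℝ) (ξ : Fin n → ℂ) (yA yB : ℝ → Fin n → ℂ),
      (∀ i j, IntegrableOn (fun t => A t i j) (Icc 0 Real.pi)) →
      (∀ i j, IntegrableOn (fun t => B t i j) (Icc 0 Real.pi)) →
      (∫ t in Icc (0:ℝ) Real.pi, ‖A t‖) ≤ R →
      (∫ t in Icc (0:ℝ) Real.pi, ‖B t‖) ≤ R →
      IntegrableOn f (Icc 0 Real.pi) →
      c ∈ Icc (0:ℝ) Real.pi →
      ContinuousOn yA (Icc 0 Real.pi) →
      (∀ x ∈ Icc (0:ℝ) Real.pi,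
        yA x = ξ + ∫ t in c..x, ((A t).mulVec (yA t) + f t)) →
      ContinuousOn yB (Icc 0 Real.pi) →
      (∀ x ∈ Icc (0:ℝ) Real.pi,
        yB x = ξ + ∫ t in c..x, ((B t).mulVec (yB t) + f t)) →
      ∀ x ∈ Icc (0:ℝ) Real.pi,
        ‖yA x - yB x‖ ≤
          C * (‖ξ‖ + ∫ t in Icc (0:ℝ) Real.pi, ‖f t‖) *
            ∫ t in Icc (0:ℝ) Real.pi, ‖A t - B t‖ := by
  have hR0 : (0:ℝ) ≤ R := hR.le
  set gb : ℝ := (2*R+2) ^ (Nat.ceil (2*R)) with hgbdef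
  have hgb1 : (1:ℝ) ≤ gb := one_le_pow₀ (by linarith)
  have hgb0 : (0:ℝ) < gb := lt_of_lt_of_le one_pos hgb1
  refine ⟨gb * gb, by positivity, ?_⟩
  intro A B f c ξ yA yB hA hB hAR hBR hf hc hyA hyAeq hyB hyBeq
  have hpi : (0:ℝ) ≤ Real.pi := Real.pi_nonneg
  have hAB : ∀ i j, IntegrableOn (fun t => (A t - B t) i j) (Icc 0 Real.pi) := by
    intro i j
    have := (hA i j).sub (hB i j)
    simpa [Matrix.sub_apply, Pi.sub_def] using this
  have hAn : IntegrableOn (fun t => ‖A t‖) (Icc 0 Real.pi) :=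
    my_integrableOn_matrix_norm measurableSet_Icc hA
  have hBn : IntegrableOn (fun t => ‖B t‖) (Icc 0 Real.pi) :=
    my_integrableOn_matrix_norm measurableSet_Icc hB
  have hABn : IntegrableOn (fun t => ‖A t - B t‖) (Icc 0 Real.pi) :=
    my_integrableOn_matrix_norm measurableSet_Icc hAB
  have hfn : IntegrableOn (fun t => ‖f t‖) (Icc 0 Real.pi) := hf.norm
  set K0 : ℝ := ‖ξ‖ + ∫ t in Icc (0:ℝ) Real.pi, ‖f t‖ with hK0def
  have hfnn : (0:ℝ) ≤ ∫ t in Icc (0:ℝ) Real.pi, ‖f t‖ :=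
    setIntegral_nonneg measurableSet_Icc fun t _ => norm_nonneg _
  have hK0 : 0 ≤ K0 := add_nonneg (norm_nonneg _) hfnn
  set D : ℝ := ∫ t in Icc (0:ℝ) Real.pi, ‖A t - B t‖ with hDdef
  have hD0 : 0 ≤ D := setIntegral_nonneg measurableSet_Icc fun t _ => norm_nonneg _
  have hΙsub : ∀ x ∈ Icc (0:ℝ) Real.pi, Ι c x ⊆ Icc (0:ℝ) Real.pi := by
    intro x hx t ht
    rcases le_total c x with h | h
    · rw [uIoc_of_le h] at ht
      exact ⟨le_trans hc.1 ht.1.le, le_trans ht.2 hx.2⟩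
    · rw [uIoc_comm, uIoc_of_le h] at ht
      exact ⟨le_trans hx.1 ht.1.le, le_trans ht.2 hc.2⟩
  -- set-integral monotonicity for nonneg integrands over subsets of [0,π]
  have hmono_set : ∀ (F : ℝ → ℝ), IntegrableOn F (Icc 0 Real.pi) →
      (∀ t ∈ Icc (0:ℝ) Real.pi, 0 ≤ F t) → ∀ s : Set ℝ, s ⊆ Icc 0 Real.pi →
      (∫ t in s, F t) ≤ ∫ t in Icc (0:ℝ) Real.pi, F t := by
    intro F hF hF0 s hs
    refine setIntegral_mono_set hF ?_ (HasSubset.Subset.eventuallyLE hs)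
    filter_upwards [ae_restrict_mem measurableSet_Icc] with t ht using hF0 t ht
  -- integrability of the vector fields
  have hAyA : IntegrableOn (fun t => (A t).mulVec (yA t)) (Icc 0 Real.pi) :=
    my_integrableOn_mulVec hA hyA
  have hByB : IntegrableOn (fun t => (B t).mulVec (yB t)) (Icc 0 Real.pi) :=
    my_integrableOn_mulVec hB hyB
  have hByBn : IntegrableOn (fun t => ‖B t‖ * ‖yB t‖) (Icc 0 Real.pi) :=
    my_integrableOn_mul_of_continuousOn hBn hyB.norm
  -- Step 1 : bound on yB
  have hypB : ∀ x ∈ Icc (0:ℝ) Real.pi, ‖yB x‖ ≤ K0 + ∫ t in Ι c x, ‖B t‖ * ‖yB t‖ := by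
    intro x hx
    rw [hyBeq x hx]
    have h1 : ‖ξ + ∫ t in c..x, ((B t).mulVec (yB t) + f t)‖
        ≤ ‖ξ‖ + ‖∫ t in c..x, ((B t).mulVec (yB t) + f t)‖ := norm_add_le _ _
    have h2 : ‖∫ t in c..x, ((B t).mulVec (yB t) + f t)‖
        ≤ ∫ t in Ι c x, ‖(B t).mulVec (yB t) + f t‖ :=
      intervalIntegral.norm_integral_le_integral_norm_uIoc
    have h3 : (∫ t in Ι c x, ‖(B t).mulVec (yB t) + f t‖)
        ≤ ∫ t in Ι c x, (‖B t‖ * ‖yB t‖ + ‖f t‖) := by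
      refine setIntegral_mono_on (IntegrableOn.mono_set ((hByB.add hf).norm) (hΙsub x hx))
        (IntegrableOn.mono_set (hByBn.add hfn) (hΙsub x hx)) measurableSet_uIoc fun t ht => ?_
      calc ‖(B t).mulVec (yB t) + f t‖ ≤ ‖(B t).mulVec (yB t)‖ + ‖f t‖ := norm_add_le _ _
        _ ≤ ‖B t‖ * ‖yB t‖ + ‖f t‖ := by
            exact add_le_add_left (Matrix.linfty_opNorm_mulVec _ _) _
    have h4 : (∫ t in Ι c x, (‖B t‖ * ‖yB t‖ + ‖f t‖))
        = (∫ t in Ι c x, ‖B t‖ * ‖yB t‖) + ∫ t in Ι c x, ‖f t‖ :=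
      integral_add (hByBn.mono_set (hΙsub x hx)) (hfn.mono_set (hΙsub x hx))
    have h5 : (∫ t in Ι c x, ‖f t‖) ≤ ∫ t in Icc (0:ℝ) Real.pi, ‖f t‖ :=
      hmono_set _ hfn (fun t _ => norm_nonneg _) _ (hΙsub x hx)
    rw [hK0def]
    linarith
  have hyBbd : ∀ x ∈ Icc (0:ℝ) Real.pi, ‖yB x‖ ≤ K0 * gb := by
    have := my_gronwall 0 Real.pi c hc (fun t => ‖B t‖) (fun t => ‖yB t‖) hBn
      (fun t _ => norm_nonneg _) hyB.norm (fun t _ => norm_nonneg _) K0 R hK0 hR0 hBR hypB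
    exact this
  -- Step 2 : the difference
  set MB : ℝ := K0 * gb with hMBdef
  have hMB0 : 0 ≤ MB := mul_nonneg hK0 hgb0.le
  have hzdiff : ∀ x ∈ Icc (0:ℝ) Real.pi,
      yA x - yB x = ∫ t in c..x, ((A t).mulVec (yA t) - (B t).mulVec (yB t)) := by
    intro x hx
    have hIA : IntervalIntegrable (fun t => (A t).mulVec (yA t) + f t) volume c x := by
      rw [intervalIntegrable_iff]
      exact IntegrableOn.mono_set (hAyA.add hf) (hΙsub x hx)
    have hIB : IntervalIntegrable (fun t => (B t).mulVec (yB t) + f t) volume c x := by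
      rw [intervalIntegrable_iff]
      exact IntegrableOn.mono_set (hByB.add hf) (hΙsub x hx)
    rw [hyAeq x hx, hyBeq x hx]
    rw [add_sub_add_left_eq_sub, ← intervalIntegral.integral_sub hIA hIB]
    congr 1
    funext t
    abel
  have hAzn : IntegrableOn (fun t => ‖A t‖ * ‖yA t - yB t‖) (Icc 0 Real.pi) :=
    my_integrableOn_mul_of_continuousOn hAn (hyA.sub hyB).norm
  have hypZ : ∀ x ∈ Icc (0:ℝ) Real.pi,
      ‖yA x - yB x‖ ≤ D * MB + ∫ t in Ι c x, ‖A t‖ * ‖yA t - yB t‖ := by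
    intro x hx
    rw [hzdiff x hx]
    have h2 : ‖∫ t in c..x, ((A t).mulVec (yA t) - (B t).mulVec (yB t))‖
        ≤ ∫ t in Ι c x, ‖(A t).mulVec (yA t) - (B t).mulVec (yB t)‖ :=
      intervalIntegral.norm_integral_le_integral_norm_uIoc
    have h3 : (∫ t in Ι c x, ‖(A t).mulVec (yA t) - (B t).mulVec (yB t)‖)
        ≤ ∫ t in Ι c x, (‖A t‖ * ‖yA t - yB t‖ + ‖A t - B t‖ * MB) := by
      refine setIntegral_mono_on (IntegrableOn.mono_set ((hAyA.sub hByB).norm) (hΙsub x hx))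
        (IntegrableOn.mono_set (hAzn.add (hABn.mul_const MB)) (hΙsub x hx)) measurableSet_uIoc fun t ht => ?_
      have htI : t ∈ Icc (0:ℝ) Real.pi := hΙsub x hx ht
      have key : (A t).mulVec (yA t) - (B t).mulVec (yB t)
          = (A t).mulVec (yA t - yB t) + (A t - B t).mulVec (yB t) := by
        rw [Matrix.mulVec_sub, Matrix.sub_mulVec]
        abel
      rw [key]
      calc ‖(A t).mulVec (yA t - yB t) + (A t - B t).mulVec (yB t)‖
          ≤ ‖(A t).mulVec (yA t - yB t)‖ + ‖(A t - B t).mulVec (yB t)‖ := norm_add_le _ _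
        _ ≤ ‖A t‖ * ‖yA t - yB t‖ + ‖A t - B t‖ * ‖yB t‖ :=
            add_le_add (Matrix.linfty_opNorm_mulVec _ _) (Matrix.linfty_opNorm_mulVec _ _)
        _ ≤ ‖A t‖ * ‖yA t - yB t‖ + ‖A t - B t‖ * MB := by
            exact add_le_add_right
              (mul_le_mul_of_nonneg_left (hyBbd t htI) (norm_nonneg _)) _
    have h4 : (∫ t in Ι c x, (‖A t‖ * ‖yA t - yB t‖ + ‖A t - B t‖ * MB))
        = (∫ t in Ι c x, ‖A t‖ * ‖yA t - yB t‖) + ∫ t in Ι c x, ‖A t - B t‖ * MB :=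
      integral_add (hAzn.mono_set (hΙsub x hx)) (IntegrableOn.mono_set (hABn.mul_const MB) (hΙsub x hx))
    have h5 : (∫ t in Ι c x, ‖A t - B t‖ * MB) ≤ D * MB := by
      rw [integral_mul_const]
      exact mul_le_mul_of_nonneg_right
        (hmono_set _ hABn (fun t _ => norm_nonneg _) _ (hΙsub x hx)) hMB0
    linarith
  have hzbd : ∀ x ∈ Icc (0:ℝ) Real.pi, ‖yA x - yB x‖ ≤ (D * MB) * gb := by
    have := my_gronwall 0 Real.pi c hc (fun t => ‖A t‖) (fun t => ‖yA t - yB t‖) hAn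
      (fun t _ => norm_nonneg _) (hyA.sub hyB).norm (fun t _ => norm_nonneg _)
      (D * MB) R (mul_nonneg hD0 hMB0) hR0 hAR hypZ
    exact this
  intro x hx
  calc ‖yA x - yB x‖ ≤ (D * MB) * gb := hzbd x hx
    _ = gb * gb * K0 * D := by rw [hMBdef]; ring
end

section
/- Let 0 < α ≤ 1 and let u : [0,π] → ℂ satisfy a Hölder condition of order α, i.e. there is C > 0 with |u(x) − u(y)| ≤ C·|x−y|^α for all x, y ∈ [0,π]. For n ≥ 1 set r_n := (2/π)·∫₀^π u(t)·cos(2nt)·(∫₀ᵗ u(s)·sin(2ns) ds) dt + (1/(2πn))·∫₀^π u(t)² dt. Then there exists M > 0 such that |r_n| ≤ M·n^{−2α} for all n ≥ 1. -/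
open MeasureTheory Set

open intervalIntegral

/-- `r_n = (2/π)∫₀^π u(t)cos(2nt)(∫₀ᵗ u(s)sin(2ns) ds) dt + (1/(2πn))∫₀^π u² dt`. -/
noncomputable def rseq (u : ℝ → ℂ) (n : ℕ) : ℂ :=
  (2 / (Real.pi : ℂ)) * (∫ t in (0:ℝ)..Real.pi, u t * Complex.cos (2 * (n:ℂ) * t) *
      (∫ s in (0:ℝ)..t, u s * Complex.sin (2 * (n:ℂ) * s)))
  + (1 / (2 * (Real.pi : ℂ) * n)) * ∫ t in (0:ℝ)..Real.pi, (u t) ^ 2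

lemma cont_of_holder {v : ℝ → ℂ} {C α : ℝ} (hα : 0 < α) (hC : 0 < C)
    (hH : ∀ x y : ℝ, ‖v x - v y‖ ≤ C * |x - y| ^ α) : Continuous v := by
  rw [Metric.continuous_iff]
  intro x ε hε
  refine ⟨(ε/(2*C))^(α⁻¹), by positivity, fun y hy => ?_⟩
  have hd : dist (v y) (v x) = ‖v y - v x‖ := dist_eq_norm _ _
  have h1 : ‖v y - v x‖ ≤ C * |y - x| ^ α := hH y x
  have h2 : |y - x| ^ α < ((ε/(2*C))^(α⁻¹)) ^ α := by
    apply Real.rpow_lt_rpow (abs_nonneg _) _ hα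
    rwa [← Real.dist_eq]
  have h3 : ((ε/(2*C))^(α⁻¹)) ^ α = ε/(2*C) := by
    rw [← Real.rpow_mul (by positivity), inv_mul_cancel₀ hα.ne', Real.rpow_one]
  rw [hd]
  calc ‖v y - v x‖ ≤ C * |y - x| ^ α := h1
    _ < C * (ε/(2*C)) := by
        rw [← h3]
        exact (mul_lt_mul_iff_right₀ hC).2 h2
    _ < ε := by
        rw [mul_div_assoc']
        rw [div_lt_iff₀ (by positivity)]
        nlinarith


lemma norm_int_le {ψ : ℝ → ℂ} {c d K : ℝ} (hcd : c ≤ d) (hK : ∀ x ∈ Set.Ioc c d, ‖ψ x‖ ≤ K) :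
    ‖∫ x in c..d, ψ x‖ ≤ K * (d - c) := by
  have := intervalIntegral.norm_integral_le_of_norm_le_const (C := K) (f := ψ) (a := c) (b := d) ?_
  · rwa [abs_of_nonneg (by linarith)] at this
  · intro x hx
    rw [Set.uIoc_of_le hcd] at hx
    exact hK x hx

-- oscillation lemma
lemma osc_bound {S φ : ℝ → ℂ} {h a b B ε : ℝ} (hh : 0 < h)
    (hScont : Continuous S) (hSanti : ∀ τ, S (τ + h) = -S τ) (hS1 : ∀ τ, ‖S τ‖ ≤ 1)
    (hφ : Continuous φ) (hab : a + h ≤ b)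
    (hB : ∀ τ ∈ Icc a b, ‖φ τ‖ ≤ B)
    (hε : ∀ τ ∈ Icc (a+h) b, ‖φ τ - φ (τ - h)‖ ≤ ε) :
    ‖∫ τ in a..b, S τ * φ τ‖ ≤ ((b - a) * ε + 2 * h * B) / 2 := by
  have hφ' : Continuous (fun τ => φ (τ - h)) := hφ.comp (by fun_prop)
  have hint : ∀ (ψ : ℝ → ℂ) (_ : Continuous ψ) (c d : ℝ),
      IntervalIntegrable (fun τ => S τ * ψ τ) volume c d := by
    intro ψ hψ c d
    exact (hScont.mul hψ).intervalIntegrable c d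
  set X := ∫ τ in a..b, S τ * φ τ with hX
  have key : (∫ τ in (a+h)..(b+h), S τ * φ (τ - h)) = -X := by
    have := intervalIntegral.integral_comp_add_right (a := a) (b := b)
      (fun τ => S τ * φ (τ - h)) h
    rw [← this]
    rw [hX, ← intervalIntegral.integral_neg]
    apply intervalIntegral.integral_congr
    intro τ _
    simp only [hSanti τ, add_sub_cancel_right]
    ring
  have split1 : X = (∫ τ in a..(a+h), S τ * φ τ) + ∫ τ in (a+h)..b, S τ * φ τ :=
    (intervalIntegral.integral_add_adjacent_intervals (hint φ hφ a (a+h)) (hint φ hφ (a+h) b)).symm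
  have split2 : (∫ τ in (a+h)..(b+h), S τ * φ (τ - h))
      = (∫ τ in (a+h)..b, S τ * φ (τ - h)) + ∫ τ in b..(b+h), S τ * φ (τ - h) :=
    (intervalIntegral.integral_add_adjacent_intervals
      (hint _ hφ' (a+h) b) (hint _ hφ' b (b+h))).symm
  have h2X : 2 * X = (∫ τ in (a+h)..b, S τ * (φ τ - φ (τ - h)))
      + ((∫ τ in a..(a+h), S τ * φ τ) - ∫ τ in b..(b+h), S τ * φ (τ - h)) := by
    have e : (∫ τ in (a+h)..b, S τ * (φ τ - φ (τ - h)))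
        = (∫ τ in (a+h)..b, S τ * φ τ) - ∫ τ in (a+h)..b, S τ * φ (τ - h) := by
      rw [← intervalIntegral.integral_sub (hint φ hφ _ _) (hint _ hφ' _ _)]
      congr 1; ext τ; ring
    have h2 : 2 * X = X - (-X) := by ring
    rw [h2, ← key, split1, split2, e]
    ring
  -- now estimate
  have hεpos : 0 ≤ ε := le_trans (norm_nonneg _) (hε (a+h) ⟨le_refl _, hab⟩)
  have hBpos : 0 ≤ B := le_trans (norm_nonneg _) (hB a ⟨le_refl _, by linarith⟩)
  have n1 : ‖∫ τ in (a+h)..b, S τ * (φ τ - φ (τ - h))‖ ≤ ε * (b - (a+h)) := by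
    have := intervalIntegral.norm_integral_le_of_norm_le_const (a := a+h) (b := b) (C := ε)
      (f := fun τ => S τ * (φ τ - φ (τ - h))) ?_
    · rw [abs_of_nonneg (by linarith : (0:ℝ) ≤ b - (a+h))] at this
      exact this
    intro τ hτ
    rw [Set.uIoc_of_le hab] at hτ
    calc ‖S τ * (φ τ - φ (τ - h))‖ = ‖S τ‖ * ‖φ τ - φ (τ - h)‖ := norm_mul _ _
      _ ≤ 1 * ε := mul_le_mul (hS1 τ) (hε τ ⟨le_of_lt hτ.1, hτ.2⟩) (norm_nonneg _) zero_le_one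
      _ = ε := one_mul ε
  have n2 : ‖∫ τ in a..(a+h), S τ * φ τ‖ ≤ B * h := by
    have := intervalIntegral.norm_integral_le_of_norm_le_const (a := a) (b := a+h) (C := B)
      (f := fun τ => S τ * φ τ) ?_
    · calc ‖∫ τ in a..(a+h), S τ * φ τ‖ ≤ B * |a + h - a| := this
        _ = B * h := by rw [show a + h - a = h by ring, abs_of_pos hh]
    · intro τ hτ
      rw [Set.uIoc_of_le (by linarith : a ≤ a + h)] at hτ
      calc ‖S τ * φ τ‖ = ‖S τ‖ * ‖φ τ‖ := norm_mul _ _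
        _ ≤ 1 * B := mul_le_mul (hS1 τ) (hB τ ⟨le_of_lt hτ.1, by linarith [hτ.2]⟩)
            (norm_nonneg _) zero_le_one
        _ = B := one_mul B
  have n3 : ‖∫ τ in b..(b+h), S τ * φ (τ - h)‖ ≤ B * h := by
    have := intervalIntegral.norm_integral_le_of_norm_le_const (a := b) (b := b+h) (C := B)
      (f := fun τ => S τ * φ (τ - h)) ?_
    · calc ‖∫ τ in b..(b+h), S τ * φ (τ - h)‖ ≤ B * |b + h - b| := this
        _ = B * h := by rw [show b + h - b = h by ring, abs_of_pos hh]
    · intro τ hτ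
      rw [Set.uIoc_of_le (by linarith : b ≤ b + h)] at hτ
      have : τ - h ∈ Icc a b := ⟨by linarith [hτ.1], by linarith [hτ.2]⟩
      calc ‖S τ * φ (τ - h)‖ = ‖S τ‖ * ‖φ (τ - h)‖ := norm_mul _ _
        _ ≤ 1 * B := mul_le_mul (hS1 τ) (hB _ this) (norm_nonneg _) zero_le_one
        _ = B := one_mul B
  have : ‖2 * X‖ ≤ (b - a) * ε + 2 * h * B := by
    rw [h2X]
    calc ‖_ + _‖ ≤ ‖∫ τ in (a+h)..b, S τ * (φ τ - φ (τ - h))‖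
        + ‖(∫ τ in a..(a+h), S τ * φ τ) - ∫ τ in b..(b+h), S τ * φ (τ - h)‖ := norm_add_le _ _
      _ ≤ ε * (b - (a+h)) + (B * h + B * h) := by
          gcongr
          exact le_trans (norm_sub_le _ _) (by gcongr)
      _ ≤ (b - a) * ε + 2 * h * B := by nlinarith
  have h2n : ‖(2:ℂ) * X‖ = 2 * ‖X‖ := by
    rw [norm_mul]; norm_num
  linarith [h2n ▸ this]


lemma triangle_swap {H : ℝ → ℝ → ℂ} (hH : Continuous (Function.uncurry H)) {b : ℝ} (hb : 0 ≤ b) :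
    (∫ t in (0:ℝ)..b, ∫ τ in (0:ℝ)..t, H t τ) = ∫ τ in (0:ℝ)..b, ∫ t in τ..b, H t τ := by
  set μ : Measure ℝ := volume.restrict (Ioc (0:ℝ) b) with hμ
  have hfin : IsFiniteMeasure μ := by
    constructor
    rw [hμ, Measure.restrict_apply_univ]
    exact measure_Ioc_lt_top
  set F : ℝ → ℝ → ℂ := fun t τ => if τ ≤ t then H t τ else 0 with hF
  have hmeas_s : MeasurableSet {p : ℝ × ℝ | p.2 ≤ p.1} :=
    (isClosed_le continuous_snd continuous_fst).measurableSet
  have hFunc : Function.uncurry F = Set.indicator {p : ℝ × ℝ | p.2 ≤ p.1} (Function.uncurry H) := by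
    ext p
    by_cases hp : p.2 ≤ p.1
    · simp [hF, Function.uncurry, hp, Set.indicator_of_mem (Set.mem_setOf.2 hp)]
    · simp [hF, Function.uncurry, hp, Set.indicator_of_notMem (fun c => hp (Set.mem_setOf.1 c))]
  have hFint : Integrable (Function.uncurry F) (μ.prod μ) := by
    obtain ⟨M, hM⟩ := (isCompact_Icc.prod isCompact_Icc).exists_bound_of_continuousOn
      (s := Icc (0:ℝ) b ×ˢ Icc (0:ℝ) b) hH.continuousOn
    apply Integrable.mono' (integrable_const (max M 0))
    · rw [hFunc]
      exact (hH.stronglyMeasurable.indicator hmeas_s).aestronglyMeasurable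
    · have hprod : μ.prod μ = (volume.prod volume).restrict (Ioc (0:ℝ) b ×ˢ Ioc (0:ℝ) b) := by
        rw [hμ, Measure.prod_restrict]
      rw [hprod]
      rw [ae_restrict_iff' (measurableSet_Ioc.prod measurableSet_Ioc)]
      filter_upwards with p hp
      rcases hp with ⟨hp1, hp2⟩
      rw [hFunc]
      by_cases hle : p ∈ {p : ℝ × ℝ | p.2 ≤ p.1}
      · rw [Set.indicator_of_mem hle]
        exact le_trans (hM p ⟨⟨hp1.1.le, hp1.2⟩, ⟨hp2.1.le, hp2.2⟩⟩) (le_max_left _ _)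
      · rw [Set.indicator_of_notMem hle]
        simp
  have swap := MeasureTheory.integral_integral_swap (μ := μ) (ν := μ) hFint
  -- LHS identification
  have lhs : (∫ t, ∫ τ, F t τ ∂μ ∂μ) = ∫ t in (0:ℝ)..b, ∫ τ in (0:ℝ)..t, H t τ := by
    rw [intervalIntegral.integral_of_le hb, hμ]
    apply setIntegral_congr_fun measurableSet_Ioc
    intro t ht
    show (∫ τ in Ioc (0:ℝ) b, F t τ) = ∫ τ in (0:ℝ)..t, H t τ
    have : (∫ τ in Ioc (0:ℝ) b, F t τ) = ∫ τ in Ioc 0 b ∩ Iic t, H t τ := by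
      have : (fun τ => F t τ) = Set.indicator (Iic t) (fun τ => H t τ) := by
        ext τ
        by_cases hτ : τ ≤ t
        · simp [hF, hτ, Set.indicator_of_mem (Set.mem_Iic.2 hτ)]
        · simp [hF, hτ, Set.indicator_of_notMem (fun c => hτ (Set.mem_Iic.1 c))]
      rw [this, MeasureTheory.integral_indicator measurableSet_Iic,
        Measure.restrict_restrict measurableSet_Iic, Set.inter_comm]
    rw [this, Set.Ioc_inter_Iic, min_eq_right ht.2, ← intervalIntegral.integral_of_le ht.1.le]
  -- RHS identification
  have rhs : (∫ τ, ∫ t, F t τ ∂μ ∂μ) = ∫ τ in (0:ℝ)..b, ∫ t in τ..b, H t τ := by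
    rw [intervalIntegral.integral_of_le hb, hμ]
    apply setIntegral_congr_fun measurableSet_Ioc
    intro τ hτ
    show (∫ t in Ioc (0:ℝ) b, F t τ) = ∫ t in τ..b, H t τ
    have hset : Ioc (0:ℝ) b ∩ Ici τ = Icc τ b := by
      ext x
      simp only [Set.mem_inter_iff, Set.mem_Ioc, Set.mem_Ici, Set.mem_Icc]
      constructor
      · rintro ⟨⟨_, h2⟩, h3⟩; exact ⟨h3, h2⟩
      · rintro ⟨h1, h2⟩; exact ⟨⟨lt_of_lt_of_le hτ.1 h1, h2⟩, h1⟩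
    have : (∫ t in Ioc (0:ℝ) b, F t τ) = ∫ t in Ioc 0 b ∩ Ici τ, H t τ := by
      have : (fun t => F t τ) = Set.indicator (Ici τ) (fun t => H t τ) := by
        ext t
        by_cases ht : τ ≤ t
        · simp [hF, ht, Set.indicator_of_mem (Set.mem_Ici.2 ht)]
        · simp [hF, ht, Set.indicator_of_notMem (fun c => ht (Set.mem_Ici.1 c))]
      rw [this, MeasureTheory.integral_indicator measurableSet_Ici,
        Measure.restrict_restrict measurableSet_Ici, Set.inter_comm]
    rw [this, hset, MeasureTheory.integral_Icc_eq_integral_Ioc,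
      ← intervalIntegral.integral_of_le hτ.2]
  rw [← lhs, ← rhs, swap]

set_option maxHeartbeats 12000000 in
lemma core_est (α C B : ℝ) (hα0 : 0 < α) (hα1 : α ≤ 1) (hC : 0 < C) (hB : 0 < B)
    (v : ℝ → ℂ) (hv : Continuous v)
    (hH : ∀ x y : ℝ, ‖v x - v y‖ ≤ C * |x - y| ^ α)
    (hBd : ∀ x : ℝ, ‖v x‖ ≤ B)
    (n : ℕ) (hn : 1 ≤ n) :
    ‖rseq v n‖ ≤ ((((Real.pi*C + 4*B)/2)^2
      + ((Real.pi^2*C^2 + 6*Real.pi*B*C)/2 + (Real.pi*B*C + 4*B^2)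
        + (2*Real.pi*B*C + 4*B^2) + 4*B^2)/2)/Real.pi) * (Real.pi/(2*(n:ℝ))) ^ (2*α) := by
  have hπ := Real.pi_pos
  have hN : (1:ℝ) ≤ (n:ℝ) := by exact_mod_cast hn
  have hN0 : (0:ℝ) < (n:ℝ) := by linarith
  obtain ⟨h, hdef⟩ : ∃ h : ℝ, h = Real.pi / (2*(n:ℝ)) := ⟨_, rfl⟩
  have hh : 0 < h := by rw [hdef]; positivity
  have hhalf : h ≤ Real.pi/2 := by
    rw [hdef]
    gcongr
    linarith
  have h2π : h + h ≤ Real.pi := by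
    have : Real.pi/2 + Real.pi/2 = Real.pi := by ring
    linarith
  have hhπ : h ≤ Real.pi := by linarith
  have hhα : 0 < h ^ α := Real.rpow_pos_of_pos hh α
  have key2 : h ≤ 2 * h ^ α := by
    have e : h = h^α * h^(1-α) := by
      rw [← Real.rpow_add hh]
      norm_num
    have e2 : h^(1-α) ≤ 2 := by
      calc h^(1-α) ≤ (Real.pi/2)^(1-α) := Real.rpow_le_rpow hh.le hhalf (by linarith)
        _ ≤ (2:ℝ)^(1-α) := by
            apply Real.rpow_le_rpow (by positivity) _ (by linarith)
            nlinarith [Real.pi_le_four]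
        _ ≤ (2:ℝ)^(1:ℝ) := Real.rpow_le_rpow_of_exponent_le one_le_two (by linarith)
        _ = 2 := Real.rpow_one 2
    calc h = h^α * h^(1-α) := e
      _ ≤ h^α * 2 := by nlinarith [hhα.le]
      _ = 2 * h^α := by ring
  have h2α : h^(2*α) = h^α * h^α := by
    rw [two_mul, Real.rpow_add hh]
  -- trig kernels
  set S : ℝ → ℂ := fun τ => ((Real.sin (2*(n:ℝ)*τ) : ℝ) : ℂ) with hSdef
  set Cc : ℝ → ℂ := fun τ => ((Real.cos (2*(n:ℝ)*τ) : ℝ) : ℂ) with hCcdef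
  have hScont : Continuous S := by
    apply Complex.continuous_ofReal.comp
    fun_prop
  have hCccont : Continuous Cc := by
    apply Complex.continuous_ofReal.comp
    fun_prop
  have hS1 : ∀ τ, ‖S τ‖ ≤ 1 := by
    intro τ
    simp only [hSdef, Complex.norm_real]
    exact abs_le.2 ⟨Real.neg_one_le_sin _, Real.sin_le_one _⟩
  have hCc1 : ∀ τ, ‖Cc τ‖ ≤ 1 := by
    intro τ
    simp only [hCcdef, Complex.norm_real]
    exact abs_le.2 ⟨Real.neg_one_le_cos _, Real.cos_le_one _⟩
  have harg : ∀ τ : ℝ, 2*(n:ℝ)*(τ+h) = 2*(n:ℝ)*τ + Real.pi := by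
    intro τ
    rw [hdef]
    field_simp
  have hSs : ∀ τ, S (τ+h) = -S τ := by
    intro τ
    simp only [hSdef, harg τ, Real.sin_add_pi, Complex.ofReal_neg]
  have hCs : ∀ τ, Cc (τ+h) = -Cc τ := by
    intro τ
    simp only [hCcdef, harg τ, Real.cos_add_pi, Complex.ofReal_neg]
  -- basic functions
  set f : ℝ → ℂ := fun t => S t * v t with hfdef
  set g : ℝ → ℂ := fun t => Cc t * v t with hgdef
  have hfc : Continuous f := hScont.mul hv
  have hgc : Continuous g := hCccont.mul hv
  set I : ℝ → ℂ := fun t => ∫ s in (0:ℝ)..t, f s with hIdef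
  set J : ℝ → ℂ := fun t => ∫ s in (0:ℝ)..t, g s with hJdef
  have hId : ∀ t, HasDerivAt I (f t) t := fun t => (hfc.integral_hasStrictDerivAt 0 t).hasDerivAt
  have hJd : ∀ t, HasDerivAt J (g t) t := fun t => (hgc.integral_hasStrictDerivAt 0 t).hasDerivAt
  have hIc : Continuous I := continuous_iff_continuousAt.2 fun t => (hId t).continuousAt
  have hJc : Continuous J := continuous_iff_continuousAt.2 fun t => (hJd t).continuousAt
  -- bridging complex trig
  have bridgeS : ∀ s : ℝ, Complex.sin (2*(n:ℂ)*(s:ℂ)) = S s := by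
    intro s
    rw [show (2*(n:ℂ)*(s:ℂ)) = ((2*(n:ℝ)*s : ℝ) : ℂ) by push_cast; ring, ← Complex.ofReal_sin]
  have bridgeC : ∀ s : ℝ, Complex.cos (2*(n:ℂ)*(s:ℂ)) = Cc s := by
    intro s
    rw [show (2*(n:ℂ)*(s:ℂ)) = ((2*(n:ℝ)*s : ℝ) : ℂ) by push_cast; ring, ← Complex.ofReal_cos]
  set U : ℂ := ∫ t in (0:ℝ)..Real.pi, (v t)^2 with hUdef
  set A : ℂ := ∫ t in (0:ℝ)..Real.pi, I t * g t with hAdef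
  have e1 : rseq v n = (2/(Real.pi:ℂ)) * A + (1/(2*(Real.pi:ℂ)*(n:ℂ))) * U := by
    rw [rseq, hAdef, hUdef]
    congr 1
    congr 1
    apply intervalIntegral.integral_congr
    intro t _
    have hin : (∫ s in (0:ℝ)..t, v s * Complex.sin (2*(n:ℂ)*(s:ℂ))) = I t := by
      rw [hIdef]
      apply intervalIntegral.integral_congr
      intro s _
      show v s * Complex.sin (2*(n:ℂ)*(s:ℂ)) = f s
      rw [bridgeS s, hfdef]
      ring
    show v t * Complex.cos (2*(n:ℂ)*(t:ℂ)) * (∫ s in (0:ℝ)..t, v s * Complex.sin (2*(n:ℂ)*(s:ℂ)))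
      = I t * g t
    rw [hin, bridgeC t, hgdef]
    ring
  -- FTC: ∫ (f·J + I·g) = I(π)J(π)
  have ftc : (∫ t in (0:ℝ)..Real.pi, (f t * J t + I t * g t)) = I Real.pi * J Real.pi := by
    have hd : ∀ t ∈ uIcc (0:ℝ) Real.pi, HasDerivAt (fun t => I t * J t) (f t * J t + I t * g t) t :=
      fun t _ => (hId t).mul (hJd t)
    have hint : IntervalIntegrable (fun t => f t * J t + I t * g t) volume 0 Real.pi :=
      ((hfc.mul hJc).add (hIc.mul hgc)).intervalIntegrable _ _
    have := intervalIntegral.integral_eq_sub_of_hasDerivAt hd hint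
    rw [this]
    have hI0 : I 0 = 0 := intervalIntegral.integral_same
    have hJ0 : J 0 = 0 := intervalIntegral.integral_same
    rw [hI0, hJ0]
    ring
  have hsplitA : (∫ t in (0:ℝ)..Real.pi, f t * J t) + A = I Real.pi * J Real.pi := by
    rw [hAdef, ← intervalIntegral.integral_add (f := fun t => f t * J t) (g := fun t => I t * g t) ((hfc.mul hJc).intervalIntegrable _ _)
      ((hIc.mul hgc).intervalIntegrable _ _)]
    exact ftc
  -- kernel identity
  set G : ℝ → ℂ := fun τ => ∫ t in τ..Real.pi, v t * v (t - τ) with hGdef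
  set Q : ℂ := ∫ τ in (0:ℝ)..Real.pi, S τ * G τ with hQdef
  have kernel : ∀ t : ℝ, f t * J t - I t * g t = ∫ τ in (0:ℝ)..t, v t * v (t - τ) * S τ := by
    intro t
    have e1 : S t * J t = ∫ σ in (0:ℝ)..t, S t * (Cc σ * v σ) := by
      rw [hJdef, ← intervalIntegral.integral_const_mul]
    have e2 : Cc t * I t = ∫ σ in (0:ℝ)..t, Cc t * (S σ * v σ) := by
      rw [hIdef, ← intervalIntegral.integral_const_mul]
    have e3 : S t * J t - Cc t * I t
        = ∫ σ in (0:ℝ)..t, ((Real.sin (2*(n:ℝ)*(t - σ)) : ℝ) : ℂ) * v σ := by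
      rw [e1, e2, ← intervalIntegral.integral_sub (f := fun σ => S t * (Cc σ * v σ)) (g := fun σ => Cc t * (S σ * v σ))
        ((continuous_const.mul (hCccont.mul hv)).intervalIntegrable _ _)
        ((continuous_const.mul (hScont.mul hv)).intervalIntegrable _ _)]
      apply intervalIntegral.integral_congr
      intro σ _
      show S t * (Cc σ * v σ) - Cc t * (S σ * v σ) = ((Real.sin (2*(n:ℝ)*(t - σ)) : ℝ) : ℂ) * v σ
      have : Real.sin (2*(n:ℝ)*(t-σ))
          = Real.sin (2*(n:ℝ)*t) * Real.cos (2*(n:ℝ)*σ)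
            - Real.cos (2*(n:ℝ)*t) * Real.sin (2*(n:ℝ)*σ) := by
        rw [show 2*(n:ℝ)*(t-σ) = 2*(n:ℝ)*t - 2*(n:ℝ)*σ by ring, Real.sin_sub]
      rw [this]
      simp only [Complex.ofReal_sub, Complex.ofReal_mul, hSdef, hCcdef]
      ring
    have e4 : (∫ σ in (0:ℝ)..t, ((Real.sin (2*(n:ℝ)*(t - σ)) : ℝ) : ℂ) * v σ)
        = ∫ τ in (0:ℝ)..t, S τ * v (t - τ) := by
      have := intervalIntegral.integral_comp_sub_left (a := (0:ℝ)) (b := t)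
        (fun τ => S τ * v (t - τ)) t
      rw [sub_self, sub_zero] at this
      rw [← this]
      apply intervalIntegral.integral_congr
      intro σ _
      show ((Real.sin (2*(n:ℝ)*(t - σ)) : ℝ) : ℂ) * v σ = S (t - σ) * v (t - (t - σ))
      rw [sub_sub_cancel]
    calc f t * J t - I t * g t = v t * (S t * J t - Cc t * I t) := by
          simp only [hfdef, hgdef]; ring
      _ = v t * ∫ τ in (0:ℝ)..t, S τ * v (t - τ) := by rw [e3, e4]
      _ = ∫ τ in (0:ℝ)..t, v t * (S τ * v (t - τ)) := by
          rw [← intervalIntegral.integral_const_mul]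
      _ = ∫ τ in (0:ℝ)..t, v t * v (t - τ) * S τ := by
          apply intervalIntegral.integral_congr
          intro τ _
          show v t * (S τ * v (t - τ)) = v t * v (t - τ) * S τ
          ring
  -- Q via triangle swap
  have hQt : (∫ t in (0:ℝ)..Real.pi, (f t * J t - I t * g t)) = Q := by
    have huncurry : Continuous (Function.uncurry (fun t τ => v t * v (t - τ) * S τ)) := by
      apply Continuous.mul
      · exact (hv.comp continuous_fst).mul (hv.comp (continuous_fst.sub continuous_snd))
      · exact hScont.comp continuous_snd
    have step1 : (∫ t in (0:ℝ)..Real.pi, (f t * J t - I t * g t))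
        = ∫ t in (0:ℝ)..Real.pi, ∫ τ in (0:ℝ)..t, v t * v (t - τ) * S τ := by
      apply intervalIntegral.integral_congr
      intro t _
      exact kernel t
    rw [step1, triangle_swap huncurry hπ.le, hQdef]
    apply intervalIntegral.integral_congr
    intro τ _
    show (∫ t in τ..Real.pi, v t * v (t - τ) * S τ) = S τ * G τ
    rw [intervalIntegral.integral_mul_const, hGdef]
    ring
  have hA : A = (I Real.pi * J Real.pi - Q)/2 := by
    have : (∫ t in (0:ℝ)..Real.pi, (f t * J t - I t * g t))
        = (∫ t in (0:ℝ)..Real.pi, f t * J t) - A := by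
      rw [hAdef, intervalIntegral.integral_sub (f := fun t => f t * J t) (g := fun t => I t * g t) ((hfc.mul hJc).intervalIntegrable _ _)
        ((hIc.mul hgc).intervalIntegrable _ _)]
    rw [this] at hQt
    field_simp
    linear_combination hsplitA - hQt
  -- E and reduction of rseq
  set E : ℂ := Q - (1/(2*(n:ℂ))) * U with hEdef
  have hπC : (Real.pi : ℂ) ≠ 0 := by
    exact_mod_cast hπ.ne'
  have hnC : (n:ℂ) ≠ 0 := by
    exact_mod_cast hN0.ne'
  have e2 : rseq v n = (1/(Real.pi:ℂ)) * (I Real.pi * J Real.pi) - (1/(Real.pi:ℂ)) * E := by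
    rw [e1, hA, hEdef]
    field_simp
    ring
  have hnorm : ‖rseq v n‖ ≤ (1/Real.pi) * (‖I Real.pi‖ * ‖J Real.pi‖) + (1/Real.pi) * ‖E‖ := by
    rw [e2]
    have hc : ‖(1/(Real.pi:ℂ))‖ = 1/Real.pi := by
      rw [show (1/(Real.pi:ℂ)) = ((1/Real.pi : ℝ) : ℂ) by push_cast; ring, Complex.norm_real,
        Real.norm_eq_abs, abs_of_pos (by positivity)]
    calc ‖(1/(Real.pi:ℂ)) * (I Real.pi * J Real.pi) - (1/(Real.pi:ℂ)) * E‖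
        ≤ ‖(1/(Real.pi:ℂ)) * (I Real.pi * J Real.pi)‖ + ‖(1/(Real.pi:ℂ)) * E‖ := norm_sub_le _ _
      _ = (1/Real.pi) * (‖I Real.pi‖ * ‖J Real.pi‖) + (1/Real.pi) * ‖E‖ := by
          rw [norm_mul, norm_mul, norm_mul, hc]
  -- bounds for I π and J π
  have hIπ : ‖I Real.pi‖ ≤ ((Real.pi*C + 4*B)/2) * h^α := by
    have hosc := osc_bound (S := S) (φ := v) (h := h) (a := 0) (b := Real.pi) (B := B)
      (ε := C * h^α) hh hScont hSs hS1 hv (by linarith) (fun τ _ => hBd τ) ?_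
    · have : ‖I Real.pi‖ ≤ ((Real.pi - 0) * (C * h^α) + 2*h*B)/2 := by
        rw [hIdef]
        exact hosc
      calc ‖I Real.pi‖ ≤ ((Real.pi - 0) * (C * h^α) + 2*h*B)/2 := this
        _ ≤ ((Real.pi*C + 4*B)/2) * h^α := by nlinarith [key2, hB.le, hhα.le]
    · intro τ _
      have := hH τ (τ - h)
      rwa [show τ - (τ - h) = h by ring, abs_of_pos hh] at this
  have hJπ : ‖J Real.pi‖ ≤ ((Real.pi*C + 4*B)/2) * h^α := by
    have hosc := osc_bound (S := Cc) (φ := v) (h := h) (a := 0) (b := Real.pi) (B := B)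
      (ε := C * h^α) hh hCccont hCs hCc1 hv (by linarith) (fun τ _ => hBd τ) ?_
    · have : ‖J Real.pi‖ ≤ ((Real.pi - 0) * (C * h^α) + 2*h*B)/2 := by
        rw [hJdef]
        exact hosc
      calc ‖J Real.pi‖ ≤ ((Real.pi - 0) * (C * h^α) + 2*h*B)/2 := this
        _ ≤ ((Real.pi*C + 4*B)/2) * h^α := by nlinarith [key2, hB.le, hhα.le]
    · intro τ _
      have := hH τ (τ - h)
      rwa [show τ - (τ - h) = h by ring, abs_of_pos hh] at this
  have hvshift : ∀ c : ℝ, Continuous fun t => v (t - c) := fun c => hv.comp (continuous_sub_right c)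
  have hvv : ∀ c : ℝ, Continuous fun t => v t * v (t - c) := fun c => hv.mul (hvshift c)
  -- auxiliary functions w, F, R and continuity
  set w : ℝ → ℂ := fun t => v t - v (t - h) with hwdef
  have hwc : Continuous w := hv.sub (hv.comp (continuous_id.sub continuous_const))
  have hwv : ∀ c : ℝ, Continuous fun t => w t * v (t - c) := fun c => hwc.mul (hvshift c)
  have hvhv : ∀ c : ℝ, Continuous fun t => v (t - h) * v (t - c) :=
    fun c => (hvshift h).mul (hvshift c)
  have hwb : ∀ t, ‖w t‖ ≤ C * h^α := by
    intro t
    have := hH t (t - h)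
    rwa [show t - (t - h) = h by ring, abs_of_pos hh] at this
  set F : ℝ → ℂ := fun τ => ∫ t in τ..Real.pi, w t * v (t - τ) with hFdef
  set R : ℝ → ℂ := fun τ => ∫ t in Real.pi..(Real.pi+h), v (t - h) * v (t - τ) with hRdef
  have hGc : Continuous G := by
    have k : Continuous (Function.uncurry fun (τ t : ℝ) => v t * v (t - τ)) :=
      (hv.comp continuous_snd).mul (hv.comp (continuous_snd.sub continuous_fst))
    have e : G = fun τ => (∫ t in (0:ℝ)..Real.pi, v t * v (t - τ))
        - ∫ t in (0:ℝ)..τ, v t * v (t - τ) := by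
      funext τ
      show (∫ t in τ..Real.pi, v t * v (t - τ))
        = (∫ t in (0:ℝ)..Real.pi, v t * v (t-τ)) - ∫ t in (0:ℝ)..τ, v t * v (t-τ)
      exact (intervalIntegral.integral_interval_sub_left
        ((hvv τ).intervalIntegrable 0 Real.pi) ((hvv τ).intervalIntegrable 0 τ)).symm
    rw [e]
    exact (intervalIntegral.continuous_parametric_intervalIntegral_of_continuous' k 0 Real.pi).sub
      (intervalIntegral.continuous_parametric_intervalIntegral_of_continuous k continuous_id)
  have hFc : Continuous F := by
    have k : Continuous (Function.uncurry fun (τ t : ℝ) => w t * v (t - τ)) :=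
      (hwc.comp continuous_snd).mul (hv.comp (continuous_snd.sub continuous_fst))
    have e : F = fun τ => (∫ t in (0:ℝ)..Real.pi, w t * v (t - τ))
        - ∫ t in (0:ℝ)..τ, w t * v (t - τ) := by
      funext τ
      show (∫ t in τ..Real.pi, w t * v (t - τ))
        = (∫ t in (0:ℝ)..Real.pi, w t * v (t-τ)) - ∫ t in (0:ℝ)..τ, w t * v (t-τ)
      exact (intervalIntegral.integral_interval_sub_left
        ((hwv τ).intervalIntegrable 0 Real.pi) ((hwv τ).intervalIntegrable 0 τ)).symm
    rw [e]
    exact (intervalIntegral.continuous_parametric_intervalIntegral_of_continuous' k 0 Real.pi).sub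
      (intervalIntegral.continuous_parametric_intervalIntegral_of_continuous k continuous_id)
  have hRc : Continuous R := by
    have k : Continuous (Function.uncurry fun (τ t : ℝ) => v (t - h) * v (t - τ)) :=
      (hv.comp (continuous_snd.sub continuous_const)).mul
        (hv.comp (continuous_snd.sub continuous_fst))
    rw [hRdef]
    exact intervalIntegral.continuous_parametric_intervalIntegral_of_continuous' k _ _
  -- shift identity for Q
  have keyQ : (∫ τ in h..(Real.pi+h), S τ * G (τ - h)) = -Q := by
    have e := intervalIntegral.integral_comp_add_right (a := (0:ℝ)) (b := Real.pi)
      (fun τ => S τ * G (τ - h)) h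
    have e' : (∫ τ in h..(Real.pi+h), S τ * G (τ - h))
        = ∫ τ in (0:ℝ)..Real.pi, S (τ + h) * G (τ + h - h) := by
      rw [zero_add] at e
      rw [← e]
    rw [e', hQdef, ← intervalIntegral.integral_neg]
    apply intervalIntegral.integral_congr
    intro τ _
    show S (τ + h) * G (τ + h - h) = -(S τ * G τ)
    rw [hSs τ, add_sub_cancel_right]
    ring
  have hSGc : Continuous fun τ => S τ * G τ := hScont.mul hGc
  have hGshiftc : Continuous fun τ => G (τ - h) := hGc.comp (continuous_sub_right h)
  have hSGhc : Continuous fun τ => S τ * G (τ - h) := hScont.mul hGshiftc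
  have s1 : Q = (∫ τ in (0:ℝ)..h, S τ * G τ) + ∫ τ in h..Real.pi, S τ * G τ := by
    rw [hQdef]
    exact (intervalIntegral.integral_add_adjacent_intervals (hSGc.intervalIntegrable _ _)
      (hSGc.intervalIntegrable _ _)).symm
  have s2 : (∫ τ in h..(Real.pi+h), S τ * G (τ - h))
      = (∫ τ in h..Real.pi, S τ * G (τ - h)) + ∫ τ in Real.pi..(Real.pi+h), S τ * G (τ - h) :=
    (intervalIntegral.integral_add_adjacent_intervals (hSGhc.intervalIntegrable _ _)
      (hSGhc.intervalIntegrable _ _)).symm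
  have h2Q : 2*Q = (∫ τ in h..Real.pi, S τ * (G τ - G (τ - h)))
      + (∫ τ in (0:ℝ)..h, S τ * G τ) - ∫ τ in Real.pi..(Real.pi+h), S τ * G (τ - h) := by
    have e : (∫ τ in h..Real.pi, S τ * (G τ - G (τ - h)))
        = (∫ τ in h..Real.pi, S τ * G τ) - ∫ τ in h..Real.pi, S τ * G (τ - h) := by
      rw [← intervalIntegral.integral_sub (hSGc.intervalIntegrable _ _)
        (hSGhc.intervalIntegrable _ _)]
      apply intervalIntegral.integral_congr
      intro τ _
      show S τ * (G τ - G (τ - h)) = S τ * G τ - S τ * G (τ - h)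
      ring
    have h2 : 2*Q = Q - (-Q) := by ring
    rw [h2, ← keyQ, s1, s2, e]
    ring
  -- the sine integral
  have hsinint : (∫ τ in (0:ℝ)..h, S τ) = (1/(n:ℂ)) := by
    have hreal : (∫ τ in (0:ℝ)..h, Real.sin (2*(n:ℝ)*τ)) = 1/(n:ℝ) := by
      rw [intervalIntegral.integral_comp_mul_left Real.sin
        (show (2*(n:ℝ)) ≠ 0 by positivity)]
      rw [mul_zero, integral_sin, Real.cos_zero,
        show 2*(n:ℝ)*h = Real.pi by rw [hdef]; field_simp, Real.cos_pi]
      rw [smul_eq_mul]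
      field_simp
      norm_num
    rw [hSdef]
    rw [intervalIntegral.integral_ofReal, hreal]
    push_cast
    ring
  have hGU : G 0 = U := by
    rw [hGdef, hUdef]
    apply intervalIntegral.integral_congr
    intro t _
    show v t * v (t - 0) = v t ^ 2
    rw [sub_zero, sq]
  have hT2 : (∫ τ in (0:ℝ)..h, S τ * G τ)
      = (1/(n:ℂ)) * U + ∫ τ in (0:ℝ)..h, S τ * (G τ - G 0) := by
    have e : ∀ τ ∈ uIcc (0:ℝ) h, (fun τ => S τ * G τ) τ
        = (fun τ => S τ * G 0 + S τ * (G τ - G 0)) τ := by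
      intro τ _
      show S τ * G τ = S τ * G 0 + S τ * (G τ - G 0)
      ring
    rw [intervalIntegral.integral_congr e,
      intervalIntegral.integral_add (f := fun τ => S τ * G 0) (g := fun τ => S τ * (G τ - G 0)) ((hScont.mul continuous_const).intervalIntegrable _ _)
        ((hScont.mul (hGc.sub continuous_const)).intervalIntegrable _ _),
      intervalIntegral.integral_mul_const, hsinint, hGU]
  -- decomposition of G τ - G (τ - h)
  have Dsplit : ∀ τ : ℝ, G τ - G (τ - h)
      = F τ - R τ := by
    intro τ
    have hkc : Continuous fun t => v (t - h) * v (t - τ) := hvhv τ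
    have Gshift : G (τ - h) = ∫ t in τ..(Real.pi+h), v (t - h) * v (t - τ) := by
      calc G (τ - h) = ∫ t in (τ-h)..(Real.pi+h-h), v t * v (t - (τ - h)) := by
            rw [hGdef]
            norm_num
        _ = ∫ t in τ..(Real.pi+h), v (t-h) * v (t-h-(τ-h)) :=
            (intervalIntegral.integral_comp_sub_right (fun t => v t * v (t - (τ - h))) h).symm
        _ = ∫ t in τ..(Real.pi+h), v (t-h) * v (t-τ) := by
            apply intervalIntegral.integral_congr
            intro t _
            show v (t-h) * v (t-h-(τ-h)) = v (t-h) * v (t-τ)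
            congr 2
            ring
    have split : (∫ t in τ..(Real.pi+h), v (t - h) * v (t - τ))
        = (∫ t in τ..Real.pi, v (t - h) * v (t - τ))
          + ∫ t in Real.pi..(Real.pi+h), v (t - h) * v (t - τ) :=
      (intervalIntegral.integral_add_adjacent_intervals (hkc.intervalIntegrable _ _)
        (hkc.intervalIntegrable _ _)).symm
    have e : F τ = (∫ t in τ..Real.pi, v t * v (t - τ))
        - ∫ t in τ..Real.pi, v (t - h) * v (t - τ) := by
      rw [hFdef, ← intervalIntegral.integral_sub
        ((hvv τ).intervalIntegrable _ _) (hkc.intervalIntegrable _ _)]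
      apply intervalIntegral.integral_congr
      intro t _
      show w t * v (t - τ) = v t * v (t - τ) - v (t - h) * v (t - τ)
      rw [hwdef]
      ring
    rw [Gshift, split, hGdef, hRdef, e]
    ring
  have T1split : (∫ τ in h..Real.pi, S τ * (G τ - G (τ - h)))
      = (∫ τ in h..Real.pi, S τ * F τ) - ∫ τ in h..Real.pi, S τ * R τ := by
    rw [← intervalIntegral.integral_sub (f := fun τ => S τ * F τ) (g := fun τ => S τ * R τ) ((hScont.mul hFc).intervalIntegrable _ _)
      ((hScont.mul hRc).intervalIntegrable _ _)]
    apply intervalIntegral.integral_congr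
    intro τ _
    show S τ * (G τ - G (τ - h)) = S τ * F τ - S τ * R τ
    rw [Dsplit τ]
    ring
  -- 2E identity
  have h2E : 2*E = ((∫ τ in h..Real.pi, S τ * F τ) - ∫ τ in h..Real.pi, S τ * R τ)
      + (∫ τ in (0:ℝ)..h, S τ * (G τ - G 0))
      - ∫ τ in Real.pi..(Real.pi+h), S τ * G (τ - h) := by
    have e : 2*E = 2*Q - (1/(n:ℂ))*U := by
      rw [hEdef]
      field_simp
    rw [e, h2Q, T1split, hT2]
    ring
  -- pointwise bound for G
  have hGσ : ∀ σ : ℝ, σ ≤ Real.pi → ‖G σ‖ ≤ B*B*(Real.pi - σ) := by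
    intro σ hσ
    simp only [hGdef]
    have := norm_int_le (ψ := fun t => v t * v (t - σ)) (K := B*B) hσ ?_
    · exact this
    · intro t _
      calc ‖v t * v (t - σ)‖ = ‖v t‖ * ‖v (t - σ)‖ := norm_mul _ _
        _ ≤ B*B := mul_le_mul (hBd t) (hBd _) (norm_nonneg _) hB.le
  -- T3 bound
  have hT3 : ‖∫ τ in Real.pi..(Real.pi+h), S τ * G (τ - h)‖ ≤ (B*B*h)*h := by
    have := norm_int_le (ψ := fun τ => S τ * G (τ - h)) (K := B*B*h)
      (show Real.pi ≤ Real.pi + h by linarith) ?_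
    · calc ‖∫ τ in Real.pi..(Real.pi+h), S τ * G (τ - h)‖
          ≤ (B*B*h) * (Real.pi + h - Real.pi) := this
        _ = (B*B*h)*h := by ring
    · intro τ hτ
      have h1 : ‖G (τ - h)‖ ≤ B*B*(Real.pi - (τ - h)) := hGσ _ (by linarith [hτ.2])
      have h2 : B*B*(Real.pi - (τ - h)) ≤ B*B*h := by nlinarith [hτ.1, mul_nonneg hB.le hB.le]
      calc ‖S τ * G (τ - h)‖ = ‖S τ‖ * ‖G (τ - h)‖ := norm_mul _ _
        _ ≤ 1 * (B*B*h) := mul_le_mul (hS1 τ) (le_trans h1 h2) (norm_nonneg _) zero_le_one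
        _ = B*B*h := one_mul _
  -- T2' bound
  have hT2p : ‖∫ τ in (0:ℝ)..h, S τ * (G τ - G 0)‖ ≤ (Real.pi*B*(C*h^α) + B*B*h)*h := by
    have := norm_int_le (ψ := fun τ => S τ * (G τ - G 0))
      (K := Real.pi*B*(C*h^α) + B*B*h) hh.le ?_
    · calc ‖∫ τ in (0:ℝ)..h, S τ * (G τ - G 0)‖
          ≤ (Real.pi*B*(C*h^α) + B*B*h) * (h - 0) := this
        _ = (Real.pi*B*(C*h^α) + B*B*h)*h := by ring
    · intro τ hτ
      have hτπ : τ ≤ Real.pi := le_trans hτ.2 hhπ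
      have split0 : G 0 = (∫ t in (0:ℝ)..τ, v t * v (t - 0)) + ∫ t in τ..Real.pi, v t * v (t-0) := by
        simp only [hGdef]
        exact (intervalIntegral.integral_add_adjacent_intervals
          ((hvv 0).intervalIntegrable _ _) ((hvv 0).intervalIntegrable _ _)).symm
      have e2 : (∫ t in τ..Real.pi, v t * (v (t - τ) - v t))
          = (∫ t in τ..Real.pi, v t * v (t - τ)) - ∫ t in τ..Real.pi, v t * v (t - 0) := by
        rw [← intervalIntegral.integral_sub ((hvv τ).intervalIntegrable _ _)
          ((hvv 0).intervalIntegrable _ _)]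
        apply intervalIntegral.integral_congr
        intro t _
        show v t * (v (t - τ) - v t) = v t * v (t - τ) - v t * v (t - 0)
        rw [sub_zero]
        ring
      have e : G τ - G 0 = (∫ t in τ..Real.pi, v t * (v (t - τ) - v t))
          - ∫ t in (0:ℝ)..τ, v t * v (t - 0) := by
        rw [split0, e2]
        simp only [hGdef]
        ring
      have n1 : ‖∫ t in τ..Real.pi, v t * (v (t - τ) - v t)‖ ≤ Real.pi*B*(C*h^α) := by
        have := norm_int_le (ψ := fun t => v t * (v (t - τ) - v t)) (K := B*(C*h^α)) hτπ ?_
        · calc ‖∫ t in τ..Real.pi, v t * (v (t - τ) - v t)‖ ≤ B*(C*h^α) * (Real.pi - τ) := this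
            _ ≤ Real.pi*B*(C*h^α) := by
                nlinarith [hτ.1.le, mul_nonneg hB.le (mul_nonneg hC.le hhα.le)]
        · intro t _
          have hd : ‖v (t - τ) - v t‖ ≤ C*h^α := by
            have := hH (t - τ) t
            rw [show t - τ - t = -τ by ring, abs_neg, abs_of_pos hτ.1] at this
            calc ‖v (t - τ) - v t‖ ≤ C * τ^α := this
              _ ≤ C * h^α := by
                  have := Real.rpow_le_rpow hτ.1.le hτ.2 hα0.le
                  nlinarith [hC.le]
          calc ‖v t * (v (t - τ) - v t)‖ = ‖v t‖ * ‖v (t - τ) - v t‖ := norm_mul _ _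
            _ ≤ B*(C*h^α) := mul_le_mul (hBd t) hd (norm_nonneg _) hB.le
      have n2 : ‖∫ t in (0:ℝ)..τ, v t * v (t - 0)‖ ≤ B*B*h := by
        have := norm_int_le (ψ := fun t => v t * v (t - 0)) (K := B*B) hτ.1.le ?_
        · calc ‖∫ t in (0:ℝ)..τ, v t * v (t - 0)‖ ≤ B*B*(τ - 0) := this
            _ ≤ B*B*h := by nlinarith [hτ.2, mul_nonneg hB.le hB.le]
        · intro t _
          calc ‖v t * v (t - 0)‖ = ‖v t‖ * ‖v (t - 0)‖ := norm_mul _ _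
            _ ≤ B*B := mul_le_mul (hBd t) (hBd _) (norm_nonneg _) hB.le
      have hGd : ‖G τ - G 0‖ ≤ Real.pi*B*(C*h^α) + B*B*h := by
        rw [e]
        exact le_trans (norm_sub_le _ _) (add_le_add n1 n2)
      calc ‖S τ * (G τ - G 0)‖ = ‖S τ‖ * ‖G τ - G 0‖ := norm_mul _ _
        _ ≤ 1 * (Real.pi*B*(C*h^α) + B*B*h) :=
            mul_le_mul (hS1 τ) hGd (norm_nonneg _) zero_le_one
        _ = _ := one_mul _
  -- F bounds for osc
  have hBF : ∀ τ ∈ Icc h Real.pi, ‖F τ‖ ≤ Real.pi*(C*h^α)*B := by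
    intro τ hτ
    simp only [hFdef]
    have := norm_int_le (ψ := fun t => w t * v (t - τ)) (K := (C*h^α)*B) hτ.2 ?_
    · calc ‖∫ t in τ..Real.pi, w t * v (t - τ)‖ ≤ (C*h^α)*B * (Real.pi - τ) := this
        _ ≤ Real.pi*(C*h^α)*B := by
            nlinarith [hτ.1, hh, mul_nonneg (mul_nonneg hC.le hhα.le) hB.le]
    · intro t _
      calc ‖w t * v (t - τ)‖ = ‖w t‖ * ‖v (t - τ)‖ := norm_mul _ _
        _ ≤ (C*h^α)*B := mul_le_mul (hwb t) (hBd _) (norm_nonneg _) (by positivity)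
  have hεF : ∀ τ ∈ Icc (h+h) Real.pi, ‖F τ - F (τ - h)‖
      ≤ Real.pi*((C*h^α)*(C*h^α)) + (C*h^α)*B*h := by
    intro τ hτ
    obtain ⟨hτ1, hτ2⟩ := hτ
    have hXc : Continuous fun t : ℝ => v (t - τ + h) :=
      hv.comp ((continuous_sub_right τ).add continuous_const)
    have hwX : Continuous fun t : ℝ => w t * v (t - τ + h) := hwc.mul hXc
    have Fsplit : F (τ - h) = (∫ t in (τ-h)..τ, w t * v (t - τ + h))
        + ∫ t in τ..Real.pi, w t * v (t - τ + h) := by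
      have e0 : F (τ - h) = ∫ t in (τ-h)..Real.pi, w t * v (t - τ + h) := by
        simp only [hFdef]
        apply intervalIntegral.integral_congr
        intro t _
        show w t * v (t - (τ - h)) = w t * v (t - τ + h)
        rw [show t - (τ - h) = t - τ + h by ring]
      rw [e0]
      exact (intervalIntegral.integral_add_adjacent_intervals
        (hwX.intervalIntegrable _ _) (hwX.intervalIntegrable _ _)).symm
    have e2 : (∫ t in τ..Real.pi, w t * (v (t - τ) - v (t - τ + h)))
        = (∫ t in τ..Real.pi, w t * v (t - τ)) - ∫ t in τ..Real.pi, w t * v (t - τ + h) := by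
      rw [← intervalIntegral.integral_sub ((hwv τ).intervalIntegrable _ _)
        (hwX.intervalIntegrable _ _)]
      apply intervalIntegral.integral_congr
      intro t _
      show w t * (v (t - τ) - v (t - τ + h)) = w t * v (t - τ) - w t * v (t - τ + h)
      ring
    have e : F τ - F (τ - h) = (∫ t in τ..Real.pi, w t * (v (t - τ) - v (t - τ + h)))
        - ∫ t in (τ-h)..τ, w t * v (t - τ + h) := by
      rw [Fsplit, e2]
      simp only [hFdef]
      ring
    have n1 : ‖∫ t in τ..Real.pi, w t * (v (t - τ) - v (t - τ + h))‖
        ≤ Real.pi*((C*h^α)*(C*h^α)) := by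
      have := norm_int_le (ψ := fun t => w t * (v (t - τ) - v (t - τ + h)))
        (K := (C*h^α)*(C*h^α)) hτ2 ?_
      · calc ‖∫ t in τ..Real.pi, w t * (v (t - τ) - v (t - τ + h))‖
            ≤ (C*h^α)*(C*h^α) * (Real.pi - τ) := this
          _ ≤ Real.pi*((C*h^α)*(C*h^α)) := by
              nlinarith [hτ1, hh, mul_nonneg (mul_nonneg hC.le hhα.le) (mul_nonneg hC.le hhα.le)]
      · intro t _
        have hd : ‖v (t - τ) - v (t - τ + h)‖ ≤ C*h^α := by
          have := hH (t - τ) (t - τ + h)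
          rwa [show t - τ - (t - τ + h) = -h by ring, abs_neg, abs_of_pos hh] at this
        calc ‖w t * (v (t - τ) - v (t - τ + h))‖
            = ‖w t‖ * ‖v (t - τ) - v (t - τ + h)‖ := norm_mul _ _
          _ ≤ (C*h^α)*(C*h^α) := mul_le_mul (hwb t) hd (norm_nonneg _) (by positivity)
    have n2 : ‖∫ t in (τ-h)..τ, w t * v (t - τ + h)‖ ≤ (C*h^α)*B*h := by
      have := norm_int_le (ψ := fun t => w t * v (t - τ + h)) (K := (C*h^α)*B)
        (show τ - h ≤ τ by linarith) ?_
      · calc ‖∫ t in (τ-h)..τ, w t * v (t - τ + h)‖ ≤ (C*h^α)*B * (τ - (τ - h)) := this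
          _ = (C*h^α)*B*h := by ring
      · intro t _
        calc ‖w t * v (t - τ + h)‖ = ‖w t‖ * ‖v (t - τ + h)‖ := norm_mul _ _
          _ ≤ (C*h^α)*B := mul_le_mul (hwb t) (hBd _) (norm_nonneg _) (by positivity)
    rw [e]
    exact le_trans (norm_sub_le _ _) (add_le_add n1 n2)
  have oscF := osc_bound hh hScont hSs hS1 hFc (show h + h ≤ Real.pi by linarith) hBF hεF
  -- R bounds for osc
  have hBR : ∀ τ ∈ Icc h Real.pi, ‖R τ‖ ≤ B*B*h := by
    intro τ _
    simp only [hRdef]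
    have := norm_int_le (ψ := fun t => v (t - h) * v (t - τ)) (K := B*B)
      (show Real.pi ≤ Real.pi + h by linarith) ?_
    · calc ‖∫ t in Real.pi..(Real.pi+h), v (t - h) * v (t - τ)‖
          ≤ B*B * (Real.pi + h - Real.pi) := this
        _ = B*B*h := by ring
    · intro t _
      calc ‖v (t - h) * v (t - τ)‖ = ‖v (t - h)‖ * ‖v (t - τ)‖ := norm_mul _ _
        _ ≤ B*B := mul_le_mul (hBd _) (hBd _) (norm_nonneg _) hB.le
  have hεR : ∀ τ ∈ Icc (h+h) Real.pi, ‖R τ - R (τ - h)‖ ≤ B*(C*h^α)*h := by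
    intro τ _
    have e : R τ - R (τ - h)
        = ∫ t in Real.pi..(Real.pi+h), v (t - h) * (v (t - τ) - v (t - τ + h)) := by
      simp only [hRdef]
      rw [← intervalIntegral.integral_sub ((hvhv τ).intervalIntegrable _ _)
        ((hvhv (τ - h)).intervalIntegrable _ _)]
      apply intervalIntegral.integral_congr
      intro t _
      show v (t - h) * v (t - τ) - v (t - h) * v (t - (τ - h))
        = v (t - h) * (v (t - τ) - v (t - τ + h))
      rw [show t - (τ - h) = t - τ + h by ring]
      ring
    rw [e]
    have := norm_int_le (ψ := fun t => v (t - h) * (v (t - τ) - v (t - τ + h)))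
      (K := B*(C*h^α)) (show Real.pi ≤ Real.pi + h by linarith) ?_
    · calc ‖∫ t in Real.pi..(Real.pi+h), v (t - h) * (v (t - τ) - v (t - τ + h))‖
          ≤ B*(C*h^α) * (Real.pi + h - Real.pi) := this
        _ = B*(C*h^α)*h := by ring
    · intro t _
      have hd : ‖v (t - τ) - v (t - τ + h)‖ ≤ C*h^α := by
        have := hH (t - τ) (t - τ + h)
        rwa [show t - τ - (t - τ + h) = -h by ring, abs_neg, abs_of_pos hh] at this
      calc ‖v (t - h) * (v (t - τ) - v (t - τ + h))‖
          = ‖v (t - h)‖ * ‖v (t - τ) - v (t - τ + h)‖ := norm_mul _ _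
        _ ≤ B*(C*h^α) := mul_le_mul (hBd _) hd (norm_nonneg _) hB.le
  have oscR := osc_bound hh hScont hSs hS1 hRc (show h + h ≤ Real.pi by linarith) hBR hεR
  -- monomial facts
  have m1 : h*h^α ≤ 2*(h^α*h^α) := by nlinarith [key2, hhα.le]
  have m2 : h*h ≤ 4*(h^α*h^α) := by nlinarith [key2, hh.le, hhα.le, m1]
  -- assemble E bound
  have c1 : ‖∫ τ in h..Real.pi, S τ * F τ‖
      ≤ ((Real.pi^2*C^2 + 6*Real.pi*B*C)/2) * (h^α*h^α) := by
    have t1 : (Real.pi - h)*(Real.pi*((C*h^α)*(C*h^α)))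
        ≤ Real.pi*(Real.pi*((C*h^α)*(C*h^α))) :=
      mul_le_mul_of_nonneg_right (by linarith) (by positivity)
    have t2 : (Real.pi - h)*((C*h^α)*B*h) ≤ Real.pi*((C*h^α)*B*(2*h^α)) := by
      apply mul_le_mul (by linarith) _ (by positivity) hπ.le
      have : (C*h^α)*B*h ≤ (C*h^α)*B*(2*h^α) := by
        apply mul_le_mul_of_nonneg_left key2 (by positivity)
      exact this
    have t3 : 2*h*(Real.pi*(C*h^α)*B) ≤ 2*(2*h^α)*(Real.pi*(C*h^α)*B) := by
      apply mul_le_mul_of_nonneg_right _ (by positivity)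
      linarith [key2]
    calc ‖∫ τ in h..Real.pi, S τ * F τ‖
        ≤ ((Real.pi - h) * (Real.pi*((C*h^α)*(C*h^α)) + (C*h^α)*B*h)
          + 2*h*(Real.pi*(C*h^α)*B))/2 := oscF
      _ ≤ ((Real.pi^2*C^2 + 6*Real.pi*B*C)/2) * (h^α*h^α) := by nlinarith [t1, t2, t3]
  have c2 : ‖∫ τ in h..Real.pi, S τ * R τ‖ ≤ (Real.pi*B*C + 4*B^2) * (h^α*h^α) := by
    have t1 : (Real.pi - h)*(B*(C*h^α)*h) ≤ Real.pi*(B*(C*h^α)*(2*h^α)) := by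
      apply mul_le_mul (by linarith) _ (by positivity) hπ.le
      apply mul_le_mul_of_nonneg_left key2 (by positivity)
    have t2 : 2*h*(B*B*h) ≤ 2*(B*B*(4*(h^α*h^α))) := by
      nlinarith [m2, hB.le, hh.le, mul_nonneg hB.le hB.le]
    calc ‖∫ τ in h..Real.pi, S τ * R τ‖
        ≤ ((Real.pi - h) * (B*(C*h^α)*h) + 2*h*(B*B*h))/2 := oscR
      _ ≤ (Real.pi*B*C + 4*B^2) * (h^α*h^α) := by nlinarith [t1, t2]
  have c3 : ‖∫ τ in (0:ℝ)..h, S τ * (G τ - G 0)‖ ≤ (2*Real.pi*B*C + 4*B^2) * (h^α*h^α) := by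
    have t1 : (Real.pi*B*C)*(h*h^α) ≤ (Real.pi*B*C)*(2*(h^α*h^α)) :=
      mul_le_mul_of_nonneg_left m1 (by positivity)
    have t2 : (B*B)*(h*h) ≤ (B*B)*(4*(h^α*h^α)) :=
      mul_le_mul_of_nonneg_left m2 (by positivity)
    calc ‖∫ τ in (0:ℝ)..h, S τ * (G τ - G 0)‖
        ≤ (Real.pi*B*(C*h^α) + B*B*h)*h := hT2p
      _ ≤ (2*Real.pi*B*C + 4*B^2) * (h^α*h^α) := by nlinarith [t1, t2]
  have c4 : ‖∫ τ in Real.pi..(Real.pi+h), S τ * G (τ - h)‖ ≤ (4*B^2) * (h^α*h^α) := by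
    have t2 : (B*B)*(h*h) ≤ (B*B)*(4*(h^α*h^α)) :=
      mul_le_mul_of_nonneg_left m2 (by positivity)
    calc ‖∫ τ in Real.pi..(Real.pi+h), S τ * G (τ - h)‖ ≤ (B*B*h)*h := hT3
      _ ≤ (4*B^2) * (h^α*h^α) := by nlinarith [t2]
  have hEbound : ‖E‖ ≤ (((Real.pi^2*C^2 + 6*Real.pi*B*C)/2 + (Real.pi*B*C + 4*B^2)
      + (2*Real.pi*B*C + 4*B^2) + 4*B^2)/2) * (h^α*h^α) := by
    have tri : ‖2*E‖ ≤ ‖∫ τ in h..Real.pi, S τ * F τ‖ + ‖∫ τ in h..Real.pi, S τ * R τ‖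
        + ‖∫ τ in (0:ℝ)..h, S τ * (G τ - G 0)‖
        + ‖∫ τ in Real.pi..(Real.pi+h), S τ * G (τ - h)‖ := by
      rw [h2E]
      calc ‖((∫ τ in h..Real.pi, S τ * F τ) - ∫ τ in h..Real.pi, S τ * R τ)
            + (∫ τ in (0:ℝ)..h, S τ * (G τ - G 0))
            - ∫ τ in Real.pi..(Real.pi+h), S τ * G (τ - h)‖
          ≤ ‖((∫ τ in h..Real.pi, S τ * F τ) - ∫ τ in h..Real.pi, S τ * R τ)
            + (∫ τ in (0:ℝ)..h, S τ * (G τ - G 0))‖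
            + ‖∫ τ in Real.pi..(Real.pi+h), S τ * G (τ - h)‖ := norm_sub_le _ _
        _ ≤ (‖(∫ τ in h..Real.pi, S τ * F τ) - ∫ τ in h..Real.pi, S τ * R τ‖
            + ‖∫ τ in (0:ℝ)..h, S τ * (G τ - G 0)‖)
            + ‖∫ τ in Real.pi..(Real.pi+h), S τ * G (τ - h)‖ := by
              gcongr
              exact norm_add_le _ _
        _ ≤ _ := by
              gcongr
              exact norm_sub_le _ _
    have h2n : ‖(2:ℂ)*E‖ = 2*‖E‖ := by
      rw [norm_mul]
      norm_num
    rw [h2n] at tri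
    linarith [c1, c2, c3, c4]
  -- final assembly
  have final : ‖rseq v n‖ ≤ ((((Real.pi*C + 4*B)/2)^2
      + ((Real.pi^2*C^2 + 6*Real.pi*B*C)/2 + (Real.pi*B*C + 4*B^2)
        + (2*Real.pi*B*C + 4*B^2) + 4*B^2)/2)/Real.pi) * (h^α*h^α) := by
    have hprod : ‖I Real.pi‖ * ‖J Real.pi‖
        ≤ (((Real.pi*C + 4*B)/2) * h^α) * (((Real.pi*C + 4*B)/2) * h^α) :=
      mul_le_mul hIπ hJπ (norm_nonneg _) (le_trans (norm_nonneg _) hIπ)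
    have step : (1/Real.pi) * (‖I Real.pi‖ * ‖J Real.pi‖) + (1/Real.pi) * ‖E‖
        ≤ (1/Real.pi) * ((((Real.pi*C + 4*B)/2) * h^α) * (((Real.pi*C + 4*B)/2) * h^α))
          + (1/Real.pi) * ((((Real.pi^2*C^2 + 6*Real.pi*B*C)/2 + (Real.pi*B*C + 4*B^2)
            + (2*Real.pi*B*C + 4*B^2) + 4*B^2)/2) * (h^α*h^α)) := by
      exact add_le_add (mul_le_mul_of_nonneg_left hprod (by positivity))
        (mul_le_mul_of_nonneg_left hEbound (by positivity))
    calc ‖rseq v n‖ ≤ (1/Real.pi) * (‖I Real.pi‖ * ‖J Real.pi‖) + (1/Real.pi) * ‖E‖ := hnorm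
      _ ≤ _ := step
      _ = ((((Real.pi*C + 4*B)/2)^2
          + ((Real.pi^2*C^2 + 6*Real.pi*B*C)/2 + (Real.pi*B*C + 4*B^2)
            + (2*Real.pi*B*C + 4*B^2) + 4*B^2)/2)/Real.pi) * (h^α*h^α) := by ring
  rw [← hdef, h2α]
  exact final
/-- **Estimate of `r_n` for Hölder potentials** (part of Proposition 3.4): if `u` satisfies
a Hölder condition of order `α ∈ (0,1]` on `[0,π]`, then `|r_n| ≤ M n^{−2α}`. -/
theorem rn_estimate_holder
    (α : ℝ) (hα0 : 0 < α) (hα1 : α ≤ 1)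
    (u : ℝ → ℂ) (C : ℝ) (hC : 0 < C)
    (hu : ∀ x ∈ Icc (0:ℝ) Real.pi, ∀ y ∈ Icc (0:ℝ) Real.pi,
      ‖u x - u y‖ ≤ C * |x - y| ^ α) :
    ∃ M > (0:ℝ), ∀ n : ℕ, 1 ≤ n → ‖rseq u n‖ ≤ M * (n:ℝ) ^ (-(2 * α)) := by
  have hπ := Real.pi_pos
  set c : ℝ → ℝ := fun x => max 0 (min x Real.pi) with hcdef
  set v : ℝ → ℂ := fun x => u (c x) with hvdef
  have hcmem : ∀ x, c x ∈ Icc (0:ℝ) Real.pi := by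
    intro x
    exact ⟨le_max_left _ _, max_le hπ.le (min_le_right x Real.pi)⟩
  have hcid : ∀ x ∈ Icc (0:ℝ) Real.pi, c x = x := by
    intro x hx
    simp only [hcdef]
    rw [min_eq_left hx.2, max_eq_right hx.1]
  have hclip : ∀ x y, |c x - c y| ≤ |x - y| := by
    intro x y
    calc |c x - c y| ≤ |min x Real.pi - min y Real.pi| := by
          have := abs_max_sub_max_le_abs (min x Real.pi) (min y Real.pi) 0
          simpa only [hcdef, max_comm] using this
      _ ≤ max |x - y| |Real.pi - Real.pi| := abs_min_sub_min_le_max _ _ _ _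
      _ = |x - y| := by simp
  have hHv : ∀ x y : ℝ, ‖v x - v y‖ ≤ C * |x - y| ^ α := by
    intro x y
    calc ‖v x - v y‖ ≤ C * |c x - c y| ^ α := hu (c x) (hcmem x) (c y) (hcmem y)
      _ ≤ C * |x - y| ^ α := by
          apply mul_le_mul_of_nonneg_left _ hC.le
          exact Real.rpow_le_rpow (abs_nonneg _) (hclip x y) hα0.le
  obtain ⟨B, hBdef⟩ : ∃ B : ℝ, B = ‖u 0‖ + C * Real.pi ^ α := ⟨_, rfl⟩
  have hπα : 0 < Real.pi ^ α := Real.rpow_pos_of_pos hπ α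
  have hB : 0 < B := by
    rw [hBdef]
    have : 0 ≤ ‖u 0‖ := norm_nonneg _
    nlinarith [mul_pos hC hπα]
  have hBd : ∀ x, ‖v x‖ ≤ B := by
    intro x
    have h1 : ‖v x - u 0‖ ≤ C * Real.pi ^ α := by
      have h0 : (0:ℝ) ∈ Icc (0:ℝ) Real.pi := ⟨le_refl _, hπ.le⟩
      have := hu (c x) (hcmem x) 0 h0
      calc ‖v x - u 0‖ ≤ C * |c x - 0| ^ α := this
        _ ≤ C * Real.pi ^ α := by
            apply mul_le_mul_of_nonneg_left _ hC.le
            apply Real.rpow_le_rpow (abs_nonneg _) _ hα0.le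
            rw [sub_zero, abs_of_nonneg (hcmem x).1]
            exact (hcmem x).2
    have e : v x = u 0 + (v x - u 0) := by ring
    calc ‖v x‖ = ‖u 0 + (v x - u 0)‖ := by rw [← e]
      _ ≤ ‖u 0‖ + ‖v x - u 0‖ := norm_add_le _ _
      _ ≤ B := by rw [hBdef]; linarith
  have hv : Continuous v := cont_of_holder hα0 hC hHv
  have hrseq : ∀ n : ℕ, rseq u n = rseq v n := by
    intro n
    have hvu : ∀ x ∈ Icc (0:ℝ) Real.pi, v x = u x := by
      intro x hx
      show u (c x) = u x
      rw [hcid x hx]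
    rw [rseq, rseq]
    congr 1
    · congr 1
      apply intervalIntegral.integral_congr
      intro t ht
      rw [uIcc_of_le hπ.le] at ht
      have hinner : (∫ s in (0:ℝ)..t, u s * Complex.sin (2*(n:ℂ)*s))
          = ∫ s in (0:ℝ)..t, v s * Complex.sin (2*(n:ℂ)*s) := by
        apply intervalIntegral.integral_congr
        intro s hs
        rw [uIcc_of_le ht.1] at hs
        have hs' : s ∈ Icc (0:ℝ) Real.pi := ⟨hs.1, le_trans hs.2 ht.2⟩
        show u s * _ = v s * _
        rw [hvu s hs']
      show u t * Complex.cos (2*(n:ℂ)*(t:ℂ)) * (∫ s in (0:ℝ)..t, u s * Complex.sin (2*(n:ℂ)*s))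
        = v t * Complex.cos (2*(n:ℂ)*(t:ℂ)) * ∫ s in (0:ℝ)..t, v s * Complex.sin (2*(n:ℂ)*s)
      rw [hvu t ht, hinner]
    · congr 1
      apply intervalIntegral.integral_congr
      intro t ht
      rw [uIcc_of_le hπ.le] at ht
      show u t ^ 2 = v t ^ 2
      rw [hvu t ht]
  obtain ⟨K, hKdef⟩ : ∃ K : ℝ, K = ((((Real.pi*C + 4*B)/2)^2
      + ((Real.pi^2*C^2 + 6*Real.pi*B*C)/2 + (Real.pi*B*C + 4*B^2)
        + (2*Real.pi*B*C + 4*B^2) + 4*B^2)/2)/Real.pi) := ⟨_, rfl⟩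
  have hK : 0 < K := by
    rw [hKdef]
    apply div_pos _ hπ
    have e1 : 0 < ((Real.pi*C + 4*B)/2)^2 := by
      apply pow_pos
      nlinarith [mul_pos hπ hC]
    have a1 : (0:ℝ) ≤ Real.pi^2*C^2 := by positivity
    have a2 : (0:ℝ) ≤ Real.pi*B*C := by
      exact mul_nonneg (mul_nonneg hπ.le hB.le) hC.le
    have a3 : (0:ℝ) ≤ B^2 := sq_nonneg _
    linarith
  have hP2 : (0:ℝ) < (Real.pi/2) ^ (2*α) := Real.rpow_pos_of_pos (by linarith) _
  refine ⟨K * (Real.pi/2)^(2*α), mul_pos hK hP2, ?_⟩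
  intro n hn
  have hn0 : (0:ℝ) < (n:ℝ) := by
    have : (1:ℝ) ≤ (n:ℝ) := by exact_mod_cast hn
    linarith
  have hcore := core_est α C B hα0 hα1 hC hB v hv hHv hBd n hn
  rw [hrseq n]
  refine le_trans hcore (le_of_eq ?_)
  have e : (Real.pi/(2*(n:ℝ)))^(2*α) = (Real.pi/2)^(2*α) * ((n:ℝ))^(-(2*α)) := by
    rw [show Real.pi/(2*(n:ℝ)) = (Real.pi/2) * ((n:ℝ))⁻¹ by field_simp]
    rw [Real.mul_rpow (by linarith) (by positivity)]
    rw [Real.inv_rpow hn0.le, Real.rpow_neg hn0.le]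
  rw [← hKdef, e]
  ring
end

section
/- Let α > 0 and let u : [0,π] → ℂ be a function of bounded variation. Then there exists M > 0 such that for every z ∈ ℂ with |Im z| ≤ α and |z| ≥ 1, and every x ∈ [0,π]: |∫₀ˣ u(t)·cos(zt) dt| + |∫₀ˣ u(t)·sin(zt) dt| ≤ M/|z|. -/
open MeasureTheory Set



lemma norm_exp_izt_le {z : ℂ} {α : ℝ} (him : |z.im| ≤ α) {t : ℝ} (ht : t ∈ Icc 0 Real.pi) :
    ‖Complex.exp (Complex.I * z * t)‖ ≤ Real.exp (α * Real.pi) := by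
  rw [Complex.norm_exp]
  apply Real.exp_le_exp.2
  have h0 : (Complex.I * z * t).re = -z.im * t := by simp [Complex.mul_re]
  rw [h0]
  calc -z.im * t ≤ |z.im| * t := by
        apply mul_le_mul_of_nonneg_right _ ht.1
        cases abs_cases z.im <;> linarith
    _ ≤ α * Real.pi := mul_le_mul him ht.2 ht.1 (le_trans (abs_nonneg _) him)

lemma iz_ne_zero {z : ℂ} (hz : 1 ≤ ‖z‖) : Complex.I * z ≠ 0 := by
  simp only [ne_eq, mul_eq_zero, Complex.I_ne_zero, false_or]
  intro h; rw [h] at hz; simp at hz; linarith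

lemma norm_integral_exp_le {z : ℂ} {α : ℝ} (him : |z.im| ≤ α) (hz : 1 ≤ ‖z‖)
    {a b : ℝ} (ha : a ∈ Icc 0 Real.pi) (hb : b ∈ Icc 0 Real.pi) :
    ‖∫ t in a..b, Complex.exp (Complex.I * z * t)‖ ≤ 2 * Real.exp (α * Real.pi) / ‖z‖ := by
  rw [integral_exp_mul_complex (iz_ne_zero hz), norm_div]
  have hnz : ‖Complex.I * z‖ = ‖z‖ := by simp
  rw [hnz]
  have hb2 : ‖Complex.exp (Complex.I * z * b) - Complex.exp (Complex.I * z * a)‖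
      ≤ 2 * Real.exp (α * Real.pi) := by
    calc ‖Complex.exp (Complex.I * z * b) - Complex.exp (Complex.I * z * a)‖
        ≤ ‖Complex.exp (Complex.I * z * b)‖ + ‖Complex.exp (Complex.I * z * a)‖ :=
          norm_sub_le _ _
      _ ≤ 2 * Real.exp (α * Real.pi) := by
          linarith [norm_exp_izt_le him hb, norm_exp_izt_le him ha]
  have : (0:ℝ) < ‖z‖ := by linarith
  gcongr

/-- core estimate for monotone functions -/
lemma core_monotone (α : ℝ) (hα : 0 < α) (g : ℝ → ℝ) (hg : Monotone g) :
    ∃ C > (0:ℝ), ∀ z : ℂ, |z.im| ≤ α → 1 ≤ ‖z‖ → ∀ x ∈ Icc (0:ℝ) Real.pi,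
      ‖∫ t in (0:ℝ)..x, (g t : ℂ) * Complex.exp (Complex.I * z * t)‖ ≤ C / ‖z‖ := by
  set K := 2 * Real.exp (α * Real.pi) with hK
  have hKpos : 0 < K := by positivity
  set G := hg.stieltjesFunction with hGdef
  have hd : 0 ≤ G Real.pi - G 0 := sub_nonneg.2 (G.mono Real.pi_pos.le)
  refine ⟨(|G 0| + (G Real.pi - G 0) + 1) * K, by positivity, ?_⟩
  intro z him hz x hx
  have hzpos : (0:ℝ) < ‖z‖ := by linarith
  set e : ℝ → ℂ := fun t => Complex.exp (Complex.I * z * t) with he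
  have hecont : Continuous e :=
    Complex.continuous_exp.comp (continuous_const.mul Complex.continuous_ofReal)
  have hIccsub : Ioc (0:ℝ) x ⊆ Icc 0 Real.pi := fun t ht => ⟨ht.1.le, ht.2.trans hx.2⟩
  rw [intervalIntegral.integral_of_le hx.1]
  -- replace g by its right-continuous version G, a.e.
  have hae : ∀ᵐ t : ℝ, (g t : ℂ) * e t = (G t : ℂ) * e t := by
    have hnull : (volume : Measure ℝ) {t | ¬ContinuousAt g t} = 0 :=
      (hg.countable_not_continuousAt).measure_zero _
    filter_upwards [measure_eq_zero_iff_ae_notMem.mp hnull] with t ht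
    have hc : ContinuousAt g t := not_not.mp ht
    have h2 : G t = g t := hg.continuousWithinAt_Ioi_iff_rightLim_eq.1 hc.continuousWithinAt
    rw [h2]
  rw [setIntegral_congr_ae measurableSet_Ioc (hae.mono fun t h _ => h)]
  -- measure setup
  set ν := G.measure with hν
  set μ := ν.restrict (Ioc 0 x) with hμ
  haveI hμfin : IsFiniteMeasure μ := by
    constructor
    rw [hμ, Measure.restrict_apply_univ, hν, G.measure_Ioc]
    exact ENNReal.ofReal_lt_top
  haveI hvfin : IsFiniteMeasure ((volume : Measure ℝ).restrict (Ioc 0 x)) := by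
    constructor
    rw [Measure.restrict_apply_univ, Real.volume_Ioc]
    exact ENNReal.ofReal_lt_top
  set m : ℝ → ℝ := fun t => G t - G 0 with hm
  -- split G t = G 0 + m t
  have hsplit : ∫ t in Ioc 0 x, (G t : ℂ) * e t =
      (∫ t in Ioc 0 x, (G 0 : ℂ) * e t) + ∫ t in Ioc 0 x, (m t : ℂ) * e t := by
    rw [← integral_add]
    · apply setIntegral_congr_ae measurableSet_Ioc
      filter_upwards with t _
      push_cast [hm]; ring
    · exact (continuous_const.mul hecont).integrableOn_Ioc
    · apply Integrable.mono' (integrable_const ((|G Real.pi| + |G 0|) * Real.exp (α * Real.pi)))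
      · exact (Complex.measurable_ofReal.comp
          ((G.mono.measurable).sub measurable_const)).aestronglyMeasurable.mul
          (hecont.measurable.aestronglyMeasurable)
      · filter_upwards [ae_restrict_mem measurableSet_Ioc] with t ht
        rw [norm_mul]
        have h1 : ‖(m t : ℂ)‖ ≤ |G Real.pi| + |G 0| := by
          have e1 := G.mono (hIccsub ht).1
          have e2 := G.mono (hIccsub ht).2
          rw [hm, Complex.norm_real, Real.norm_eq_abs]
          cases abs_cases (G t - G 0) <;> cases abs_cases (G Real.pi) <;>
            cases abs_cases (G 0) <;> linarith
        have h2 : ‖e t‖ ≤ Real.exp (α * Real.pi) := norm_exp_izt_le him (hIccsub ht)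
        exact mul_le_mul h1 h2 (norm_nonneg _) (by positivity)
  rw [hsplit]
  -- first term
  have hterm1 : ‖∫ t in Ioc 0 x, (G 0 : ℂ) * e t‖ ≤ |G 0| * (K / ‖z‖) := by
    rw [integral_const_mul, norm_mul, Complex.norm_real, Real.norm_eq_abs]
    apply mul_le_mul_of_nonneg_left _ (abs_nonneg _)
    rw [← intervalIntegral.integral_of_le hx.1]
    exact norm_integral_exp_le him hz ⟨le_refl 0, Real.pi_pos.le⟩ hx
  -- Fubini term
  set F : ℝ → ℝ → ℂ := fun t s => if s ≤ t then e t else 0 with hF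
  have hFrep : ∀ t ∈ Ioc (0:ℝ) x, (m t : ℂ) * e t = ∫ s, F t s ∂μ := by
    intro t ht
    have h1 : (fun s => F t s) = (Iic t).indicator (fun _ => e t) := by
      funext s; simp [hF, indicator_apply, mem_Iic]
    rw [h1, integral_indicator_const _ measurableSet_Iic]
    have h2 : μ (Iic t) = ENNReal.ofReal (G t - G 0) := by
      rw [hμ, Measure.restrict_apply measurableSet_Iic]
      have h3 : Iic t ∩ Ioc 0 x = Ioc 0 t := by
        ext s
        simp only [mem_inter_iff, mem_Iic, mem_Ioc]
        exact ⟨fun ⟨a, b, _⟩ => ⟨b, a⟩, fun ⟨a, b⟩ => ⟨b, a, b.trans ht.2⟩⟩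
      rw [h3, hν, G.measure_Ioc]
    rw [measureReal_def, h2, ENNReal.toReal_ofReal (sub_nonneg.2 (G.mono ht.1.le))]
    rw [Complex.real_smul]
  have hint : Integrable (Function.uncurry F)
      (((volume : Measure ℝ).restrict (Ioc 0 x)).prod μ) := by
    apply Integrable.mono' (integrable_const (Real.exp (α * Real.pi)))
    · apply Measurable.aestronglyMeasurable
      exact Measurable.ite (measurableSet_le measurable_snd measurable_fst)
        (hecont.measurable.comp measurable_fst) measurable_const
    · have hprod : ((volume : Measure ℝ).restrict (Ioc 0 x)).prod μ =
          ((volume : Measure ℝ).prod ν).restrict ((Ioc 0 x) ×ˢ (Ioc 0 x)) :=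
        Measure.prod_restrict _ _
      rw [hprod]
      filter_upwards [ae_restrict_mem (measurableSet_Ioc.prod measurableSet_Ioc)] with p hp
      simp only [Function.uncurry_def, hF]
      split_ifs with h
      · exact norm_exp_izt_le him (hIccsub hp.1)
      · simp; positivity
  have hswap : ∫ t in Ioc 0 x, (m t : ℂ) * e t = ∫ s, (∫ t in Ioc 0 x, F t s) ∂μ := by
    rw [setIntegral_congr_ae measurableSet_Ioc
      (Filter.Eventually.of_forall fun t h => hFrep t h)]
    exact integral_integral_swap hint
  have hinner : ∀ s ∈ Ioc (0:ℝ) x, ‖∫ t in Ioc 0 x, F t s‖ ≤ K / ‖z‖ := by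
    intro s hs
    have h1 : (fun t => F t s) = fun t => (Ici s).indicator e t := by
      funext t; simp [hF, indicator_apply, mem_Ici]
    rw [h1, setIntegral_indicator measurableSet_Ici]
    have h2 : Ioc 0 x ∩ Ici s = Icc s x := by
      ext t
      simp only [mem_inter_iff, mem_Ioc, mem_Icc, mem_Ici]
      exact ⟨fun ⟨⟨_, b⟩, c⟩ => ⟨c, b⟩, fun ⟨a, b⟩ => ⟨⟨hs.1.trans_le a, b⟩, a⟩⟩
    rw [h2, integral_Icc_eq_integral_Ioc, ← intervalIntegral.integral_of_le hs.2]
    exact norm_integral_exp_le him hz ⟨hs.1.le, hs.2.trans hx.2⟩ hx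
  have hterm2 : ‖∫ t in Ioc 0 x, (m t : ℂ) * e t‖ ≤ (G Real.pi - G 0) * (K / ‖z‖) := by
    rw [hswap]
    have hb : ‖∫ s, (∫ t in Ioc 0 x, F t s) ∂μ‖ ≤ (K / ‖z‖) * (μ univ).toReal := by
      apply norm_integral_le_of_norm_le_const
      filter_upwards [ae_restrict_mem measurableSet_Ioc] with s hs
      exact hinner s hs
    have huniv : (μ univ).toReal = G x - G 0 := by
      rw [hμ, Measure.restrict_apply_univ, hν, G.measure_Ioc,
        ENNReal.toReal_ofReal (sub_nonneg.2 (G.mono hx.1))]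
    rw [huniv] at hb
    have h5 : G x ≤ G Real.pi := G.mono hx.2
    have h6 : 0 ≤ K / ‖z‖ := by positivity
    nlinarith [hb, mul_nonneg h6 (sub_nonneg.2 h5)]
  calc ‖(∫ t in Ioc 0 x, (G 0 : ℂ) * e t) + ∫ t in Ioc 0 x, (m t : ℂ) * e t‖
      ≤ ‖∫ t in Ioc 0 x, (G 0 : ℂ) * e t‖ + ‖∫ t in Ioc 0 x, (m t : ℂ) * e t‖ := norm_add_le _ _
    _ ≤ |G 0| * (K / ‖z‖) + (G Real.pi - G 0) * (K / ‖z‖) := add_le_add hterm1 hterm2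
    _ ≤ (|G 0| + (G Real.pi - G 0) + 1) * K / ‖z‖ := by
        have h6 : 0 ≤ K / ‖z‖ := by positivity
        have hKz : (|G 0| + (G Real.pi - G 0) + 1) * K / ‖z‖ =
            |G 0| * (K / ‖z‖) + (G Real.pi - G 0) * (K / ‖z‖) + K / ‖z‖ := by
          field_simp
        rw [hKz]; linarith

lemma mono_mul_exp_intervalIntegrable (g : ℝ → ℝ) (hg : Monotone g) (c : ℂ) (a b : ℝ) :
    IntervalIntegrable (fun t => (g t : ℂ) * Complex.exp (c * t)) volume a b := by
  apply IntervalIntegrable.mul_continuousOn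
  · have hgi : IntervalIntegrable g volume a b := hg.intervalIntegrable
    exact ⟨Complex.ofRealCLM.integrable_comp hgi.1, Complex.ofRealCLM.integrable_comp hgi.2⟩
  · exact (Complex.continuous_exp.comp
      (continuous_const.mul Complex.continuous_ofReal)).continuousOn

/-- core estimate for combinations of four monotone functions -/
lemma core_combo (α : ℝ) (hα : 0 < α) (p1 q1 p2 q2 : ℝ → ℝ)
    (hp1 : Monotone p1) (hq1 : Monotone q1) (hp2 : Monotone p2) (hq2 : Monotone q2) :
    ∃ C > (0:ℝ), ∀ z : ℂ, |z.im| ≤ α → 1 ≤ ‖z‖ → ∀ x ∈ Icc (0:ℝ) Real.pi,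
      ‖∫ t in (0:ℝ)..x,
          (((p1 t : ℂ) - (q1 t : ℂ)) + ((p2 t : ℂ) - (q2 t : ℂ)) * Complex.I) *
            Complex.exp (Complex.I * z * t)‖ ≤ C / ‖z‖ := by
  obtain ⟨C1, hC1, H1⟩ := core_monotone α hα p1 hp1
  obtain ⟨C2, hC2, H2⟩ := core_monotone α hα q1 hq1
  obtain ⟨C3, hC3, H3⟩ := core_monotone α hα p2 hp2
  obtain ⟨C4, hC4, H4⟩ := core_monotone α hα q2 hq2
  refine ⟨C1 + C2 + C3 + C4, by positivity, ?_⟩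
  intro z him hz x hx
  have i1 := mono_mul_exp_intervalIntegrable p1 hp1 (Complex.I * z) 0 x
  have i2 := mono_mul_exp_intervalIntegrable q1 hq1 (Complex.I * z) 0 x
  have i3 := mono_mul_exp_intervalIntegrable p2 hp2 (Complex.I * z) 0 x
  have i4 := mono_mul_exp_intervalIntegrable q2 hq2 (Complex.I * z) 0 x
  have hsplit : ∫ t in (0:ℝ)..x,
      (((p1 t : ℂ) - (q1 t : ℂ)) + ((p2 t : ℂ) - (q2 t : ℂ)) * Complex.I) *
        Complex.exp (Complex.I * z * t) =
      ((∫ t in (0:ℝ)..x, (p1 t : ℂ) * Complex.exp (Complex.I * z * t)) -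
       (∫ t in (0:ℝ)..x, (q1 t : ℂ) * Complex.exp (Complex.I * z * t))) +
      ((∫ t in (0:ℝ)..x, (p2 t : ℂ) * Complex.exp (Complex.I * z * t)) -
       (∫ t in (0:ℝ)..x, (q2 t : ℂ) * Complex.exp (Complex.I * z * t))) * Complex.I := by
    rw [← intervalIntegral.integral_sub i1 i2, ← intervalIntegral.integral_sub i3 i4,
      ← intervalIntegral.integral_mul_const,
      ← intervalIntegral.integral_add (i1.sub i2) ((i3.sub i4).mul_const _)]
    apply intervalIntegral.integral_congr
    intro t _
    ring
  rw [hsplit]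
  have n1 := H1 z him hz x hx
  have n2 := H2 z him hz x hx
  have n3 := H3 z him hz x hx
  have n4 := H4 z him hz x hx
  have key : ∀ a b c d : ℂ, ‖(a - b) + (c - d) * Complex.I‖ ≤ ‖a‖ + ‖b‖ + ‖c‖ + ‖d‖ := by
    intro a b c d
    calc ‖(a - b) + (c - d) * Complex.I‖ ≤ ‖a - b‖ + ‖(c - d) * Complex.I‖ := norm_add_le _ _
      _ = ‖a - b‖ + ‖c - d‖ := by rw [norm_mul, Complex.norm_I, mul_one]
      _ ≤ (‖a‖ + ‖b‖) + (‖c‖ + ‖d‖) := add_le_add (norm_sub_le _ _) (norm_sub_le _ _)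
      _ = ‖a‖ + ‖b‖ + ‖c‖ + ‖d‖ := by ring
  calc ‖_ + _ * Complex.I‖ ≤ _ := key _ _ _ _
    _ ≤ C1 / ‖z‖ + C2 / ‖z‖ + C3 / ‖z‖ + C4 / ‖z‖ := by
        exact add_le_add (add_le_add (add_le_add n1 n2) n3) n4
    _ = (C1 + C2 + C3 + C4) / ‖z‖ := by ring

/-- **Decay of oscillatory integrals for bounded variation functions** (used in
Proposition 3.2): if `u` has bounded variation on `[0,π]`, then for `z` in the strip
`|Im z| ≤ α`, `|z| ≥ 1`, the integrals `∫₀ˣ u cos(zt) dt` and `∫₀ˣ u sin(zt) dt` are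
`O(1/|z|)` uniformly in `x ∈ [0,π]`. -/
theorem oscillatory_integral_decay_bounded_variation
    (α : ℝ) (hα : 0 < α) (u : ℝ → ℂ)
    (hu : BoundedVariationOn u (Icc 0 Real.pi)) :
    ∃ M > (0:ℝ), ∀ z : ℂ, |z.im| ≤ α → 1 ≤ ‖z‖ →
      ∀ x ∈ Icc (0:ℝ) Real.pi,
        ‖∫ t in (0:ℝ)..x, u t * Complex.cos (z * t)‖ +
          ‖∫ t in (0:ℝ)..x, u t * Complex.sin (z * t)‖ ≤ M / ‖z‖ := by
  -- real and imaginary parts have bounded variation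
  have hre : BoundedVariationOn (fun t => (u t).re) (Icc 0 Real.pi) :=
    Complex.reCLM.lipschitz.comp_boundedVariationOn hu
  have him' : BoundedVariationOn (fun t => (u t).im) (Icc 0 Real.pi) :=
    Complex.imCLM.lipschitz.comp_boundedVariationOn hu
  obtain ⟨p1, q1, hp1, hq1, h1⟩ :=
    hre.locallyBoundedVariationOn.exists_monotoneOn_sub_monotoneOn
  obtain ⟨p2, q2, hp2, hq2, h2⟩ :=
    him'.locallyBoundedVariationOn.exists_monotoneOn_sub_monotoneOn
  -- clamp to [0, π]
  set c : ℝ → ℝ := fun t => min (max t 0) Real.pi with hc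
  have hc_mono : Monotone c := (monotone_id.max monotone_const).min monotone_const
  have hc_mem : ∀ t, c t ∈ Icc (0:ℝ) Real.pi :=
    fun t => ⟨le_min (le_max_right _ _) Real.pi_pos.le, min_le_right _ _⟩
  have hc_eq : ∀ t ∈ Icc (0:ℝ) Real.pi, c t = t :=
    fun t ht => by rw [hc]; simp only; rw [max_eq_left ht.1, min_eq_left ht.2]
  have hmono : ∀ (p : ℝ → ℝ), MonotoneOn p (Icc 0 Real.pi) → Monotone (p ∘ c) :=
    fun p hp a b hab => hp (hc_mem a) (hc_mem b) (hc_mono hab)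
  set w : ℝ → ℂ := fun t =>
    (((p1 ∘ c) t : ℂ) - ((q1 ∘ c) t : ℂ)) + (((p2 ∘ c) t : ℂ) - ((q2 ∘ c) t : ℂ)) * Complex.I
    with hw
  have hwu : ∀ t ∈ Icc (0:ℝ) Real.pi, w t = u t := by
    intro t ht
    have e1 : (u t).re = p1 t - q1 t := congrFun h1 t
    have e2 : (u t).im = p2 t - q2 t := congrFun h2 t
    rw [hw]; simp only [Function.comp_apply, hc_eq t ht]
    rw [← Complex.re_add_im (u t), e1, e2]
    push_cast; ring
  obtain ⟨C, hC, HC⟩ := core_combo α hα (p1 ∘ c) (q1 ∘ c) (p2 ∘ c) (q2 ∘ c)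
    (hmono p1 hp1) (hmono q1 hq1) (hmono p2 hp2) (hmono q2 hq2)
  refine ⟨2 * C, by positivity, ?_⟩
  intro z him hz x hx
  have hzpos : (0:ℝ) < ‖z‖ := by linarith
  have hsub : uIcc (0:ℝ) x ⊆ Icc (0:ℝ) Real.pi := by
    rw [uIcc_of_le hx.1]
    exact fun t ht => ⟨ht.1, ht.2.trans hx.2⟩
  -- replace u by w in both integrals
  have hcongr : ∀ v : ℂ → ℂ, (∫ t in (0:ℝ)..x, u t * v t) = ∫ t in (0:ℝ)..x, w t * v t := by
    intro v
    apply intervalIntegral.integral_congr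
    intro t ht
    simp only
    rw [hwu t (hsub ht)]
  -- integrability of w * exp
  have hwint : ∀ z' : ℂ, IntervalIntegrable
      (fun t => w t * Complex.exp (Complex.I * z' * t)) volume 0 x := by
    intro z'
    have i1 := mono_mul_exp_intervalIntegrable _ (hmono p1 hp1) (Complex.I * z') 0 x
    have i2 := mono_mul_exp_intervalIntegrable _ (hmono q1 hq1) (Complex.I * z') 0 x
    have i3 := mono_mul_exp_intervalIntegrable _ (hmono p2 hp2) (Complex.I * z') 0 x
    have i4 := mono_mul_exp_intervalIntegrable _ (hmono q2 hq2) (Complex.I * z') 0 x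
    have : (fun t => w t * Complex.exp (Complex.I * z' * t)) = fun t =>
        ((p1 ∘ c) t : ℂ) * Complex.exp (Complex.I * z' * t)
        - ((q1 ∘ c) t : ℂ) * Complex.exp (Complex.I * z' * t)
        + (((p2 ∘ c) t : ℂ) * Complex.exp (Complex.I * z' * t)
          - ((q2 ∘ c) t : ℂ) * Complex.exp (Complex.I * z' * t)) * Complex.I := by
      funext t; rw [hw]; ring
    rw [this]
    exact (i1.sub i2).add ((i3.sub i4).mul_const _)
  have hnegim : |(-z).im| ≤ α := by rw [Complex.neg_im, abs_neg]; exact him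
  have hnegnorm : 1 ≤ ‖-z‖ := by rwa [norm_neg]
  have bz := HC z him hz x hx
  have bnz := HC (-z) hnegim hnegnorm x hx
  -- cosine
  have hcos : ‖∫ t in (0:ℝ)..x, w t * Complex.cos (z * t)‖ ≤ C / ‖z‖ := by
    have hdecomp : (fun t : ℝ => w t * Complex.cos (z * t)) = fun t =>
        (w t * Complex.exp (Complex.I * z * t) + w t * Complex.exp (Complex.I * (-z) * t))
          * (1 / 2 : ℂ) := by
      funext t
      have hdef : Complex.cos (z * t) =
          (Complex.exp (z * (t:ℂ) * Complex.I) + Complex.exp (-(z * (t:ℂ)) * Complex.I)) / 2 :=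
        rfl
      have a1 : z * (t:ℂ) * Complex.I = Complex.I * z * t := by ring
      have a2 : -(z * (t:ℂ)) * Complex.I = Complex.I * (-z) * t := by ring
      rw [hdef, a1, a2]; ring
    rw [hdecomp, intervalIntegral.integral_mul_const,
      intervalIntegral.integral_add (hwint z) (hwint (-z))]
    rw [norm_mul]
    have : ‖(1 / 2 : ℂ)‖ = 1 / 2 := by norm_num
    rw [this]
    have hsum : ‖(∫ t in (0:ℝ)..x, w t * Complex.exp (Complex.I * z * t)) +
        ∫ t in (0:ℝ)..x, w t * Complex.exp (Complex.I * (-z) * t)‖ ≤ C / ‖z‖ + C / ‖-z‖ :=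
      le_trans (norm_add_le _ _) (add_le_add bz bnz)
    rw [norm_neg] at hsum
    linarith
  -- sine
  have hsin : ‖∫ t in (0:ℝ)..x, w t * Complex.sin (z * t)‖ ≤ C / ‖z‖ := by
    have hdecomp : (fun t : ℝ => w t * Complex.sin (z * t)) = fun t =>
        (w t * Complex.exp (Complex.I * (-z) * t) - w t * Complex.exp (Complex.I * z * t))
          * (Complex.I / 2) := by
      funext t
      have hdef : Complex.sin (z * t) =
          (Complex.exp (-(z * (t:ℂ)) * Complex.I) - Complex.exp (z * (t:ℂ) * Complex.I))
            * Complex.I / 2 := rfl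
      have a1 : z * (t:ℂ) * Complex.I = Complex.I * z * t := by ring
      have a2 : -(z * (t:ℂ)) * Complex.I = Complex.I * (-z) * t := by ring
      rw [hdef, a1, a2]; ring
    rw [hdecomp, intervalIntegral.integral_mul_const,
      intervalIntegral.integral_sub (hwint (-z)) (hwint z)]
    rw [norm_mul]
    have : ‖(Complex.I / 2 : ℂ)‖ = 1 / 2 := by
      rw [norm_div, Complex.norm_I]; norm_num
    rw [this]
    have hsum : ‖(∫ t in (0:ℝ)..x, w t * Complex.exp (Complex.I * (-z) * t)) -
        ∫ t in (0:ℝ)..x, w t * Complex.exp (Complex.I * z * t)‖ ≤ C / ‖-z‖ + C / ‖z‖ :=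
      le_trans (norm_sub_le _ _) (add_le_add bnz bz)
    rw [norm_neg] at hsum
    linarith
  rw [hcongr (fun t => Complex.cos (z * t)), hcongr (fun t => Complex.sin (z * t))]
  have : 2 * C / ‖z‖ = C / ‖z‖ + C / ‖z‖ := by ring
  rw [this]
  exact add_le_add hcos hsin
end
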